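/- arXiv:1701.00275 — 5 statements merged into one kernel-verified Lean document; each statement's English description precedes it below -/
import Mathlib

section
/- Let K be a field and n ≥ 1 a natural number. In the planar Cremona group Cr₂(K), let s be the K-algebra automorphism of L with s(x) = x + 1, s(y) = y, and let a be the K-algebra automorphism with a(x) = x, a(y) = y + xⁿ. Then the subgroup Γₙ of Cr₂(K) generated by s and a is nilpotent of nilpotency class at most n + 1. -/
open MvPolynomial

/-- The rational function field `K(X,Y)`, realized as the fraction field of the polynomial
ring in two variables. Its group of `K`-algebra automorphisms is the planar Cremona
group `Cr₂(K)`. -/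
noncomputable abbrev CremonaField (K : Type*) [Field K] : Type _ :=
  FractionRing (MvPolynomial (Fin 2) K)

/-- The image of the first variable in `K(X,Y)`. -/
noncomputable def genX (K : Type*) [Field K] : CremonaField K :=
  algebraMap (MvPolynomial (Fin 2) K) (CremonaField K) (X 0)

/-- The image of the second variable in `K(X,Y)`. -/
noncomputable def genY (K : Type*) [Field K] : CremonaField K :=
  algebraMap (MvPolynomial (Fin 2) K) (CremonaField K) (X 1)

set_option maxHeartbeats 1000000
set_option synthInstance.maxHeartbeats 400000

section Aux

open scoped commutatorElement

variable {K : Type*} [Field K]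

local notation "𝕃" => CremonaField K

/-- Two automorphisms of `K(X,Y)` agreeing on `x` and `y` are equal. -/
theorem cremona_ext {σ τ : 𝕃 ≃ₐ[K] 𝕃}
    (hx : σ (genX K) = τ (genX K)) (hy : σ (genY K) = τ (genY K)) : σ = τ := by
  have key : (σ : 𝕃 →ₐ[K] 𝕃).comp (IsScalarTower.toAlgHom K (MvPolynomial (Fin 2) K) 𝕃)
      = (τ : 𝕃 →ₐ[K] 𝕃).comp (IsScalarTower.toAlgHom K (MvPolynomial (Fin 2) K) 𝕃) := by
    apply MvPolynomial.algHom_ext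
    intro i
    fin_cases i
    · exact hx
    · exact hy
  have key' : ∀ r : MvPolynomial (Fin 2) K,
      σ (algebraMap (MvPolynomial (Fin 2) K) 𝕃 r) = τ (algebraMap (MvPolynomial (Fin 2) K) 𝕃 r) :=
    fun r => DFunLike.congr_fun key r
  ext z
  obtain ⟨p, q, -, rfl⟩ := IsFractionRing.div_surjective (A := MvPolynomial (Fin 2) K) z
  rw [map_div₀, map_div₀, key' p, key' q]

/-- The shift polynomial `X + c`. -/
noncomputable def shiftP (c : K) : Polynomial K := Polynomial.X + Polynomial.C c

theorem natDegree_shiftP (c : K) : (shiftP c).natDegree = 1 := Polynomial.natDegree_X_add_C c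

theorem comp_shiftP_comp (p : Polynomial K) (c d : K) :
    (p.comp (shiftP c)).comp (shiftP d) = p.comp (shiftP (d + c)) := by
  rw [Polynomial.comp_assoc]
  congr 1
  simp only [shiftP, Polynomial.add_comp, Polynomial.X_comp, Polynomial.C_comp, map_add]
  ring

theorem comp_shiftP_zero (p : Polynomial K) : p.comp (shiftP 0) = p := by
  simp [shiftP]

theorem degree_comp_shiftP (p : Polynomial K) (c : K) :
    (p.comp (shiftP c)).degree = p.degree := by
  rcases eq_or_ne p 0 with rfl | hp
  · simp
  have h0 : p.comp (shiftP c) ≠ 0 := by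
    intro h
    apply hp
    have := congrArg (fun r : Polynomial K => r.comp (shiftP (-c))) h
    simpa [comp_shiftP_comp, comp_shiftP_zero] using this
  rw [Polynomial.degree_eq_natDegree h0, Polynomial.degree_eq_natDegree hp,
    Polynomial.natDegree_comp, natDegree_shiftP, mul_one]

theorem leadingCoeff_comp_shiftP (p : Polynomial K) (c : K) :
    (p.comp (shiftP c)).leadingCoeff = p.leadingCoeff := by
  rw [Polynomial.leadingCoeff_comp (by rw [natDegree_shiftP]; exact one_ne_zero)]
  have : (shiftP c).leadingCoeff = 1 := (Polynomial.monic_X_add_C c)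
  rw [this, one_pow, mul_one]

/-- Key degree drop: `p(X + c) - p(X)` has degree smaller than `p`. -/
theorem degree_comp_shiftP_sub_lt (q : Polynomial K) (c : K) (k : ℕ)
    (hq : q.degree < (k : WithBot ℕ)) :
    (q.comp (shiftP c) - q).degree < ((k - 1 : ℕ) : WithBot ℕ) := by
  rcases eq_or_ne (q.comp (shiftP c) - q) 0 with h0 | h0
  · rw [h0, Polynomial.degree_zero]; exact WithBot.bot_lt_coe _
  have hq0 : q ≠ 0 := by rintro rfl; simp at h0
  have hc0 : q.comp (shiftP c) ≠ 0 := by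
    intro h
    apply hq0
    rw [← Polynomial.degree_eq_bot, ← degree_comp_shiftP q c, h, Polynomial.degree_zero]
  have hlt : (q.comp (shiftP c) - q).degree < (q.comp (shiftP c)).degree :=
    Polynomial.degree_sub_lt (degree_comp_shiftP q c) hc0 (leadingCoeff_comp_shiftP q c)
  rw [degree_comp_shiftP q c, Polynomial.degree_eq_natDegree hq0] at hlt
  rw [Polynomial.degree_eq_natDegree hq0] at hq
  have hnk : q.natDegree < k := by exact_mod_cast hq
  have : q.natDegree ≤ k - 1 := Nat.le_sub_one_of_lt hnk
  exact hlt.trans_le (by exact_mod_cast this)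

/-- `σ` maps `x ↦ x + c` and `y ↦ y + p(x)`. -/
def HasData (σ : 𝕃 ≃ₐ[K] 𝕃) (c : K) (p : Polynomial K) : Prop :=
  σ (genX K) = genX K + algebraMap K 𝕃 c ∧
  σ (genY K) = genY K + Polynomial.aeval (genX K) p

theorem map_paeval (σ : 𝕃 ≃ₐ[K] 𝕃) (z : 𝕃) (p : Polynomial K) :
    σ (Polynomial.aeval z p) = Polynomial.aeval (σ z) p :=
  (Polynomial.aeval_algHom_apply (σ : 𝕃 →ₐ[K] 𝕃) z p).symm

theorem aeval_shiftP (c : K) (z : 𝕃) (p : Polynomial K) :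
    Polynomial.aeval z (p.comp (shiftP c)) = Polynomial.aeval (z + algebraMap K 𝕃 c) p := by
  rw [Polynomial.aeval_comp]
  simp [shiftP]

theorem HasData.one : HasData (1 : 𝕃 ≃ₐ[K] 𝕃) 0 0 := by
  constructor <;> simp

theorem HasData.mul {σ τ : 𝕃 ≃ₐ[K] 𝕃} {c c' : K} {p p' : Polynomial K}
    (hσ : HasData σ c p) (hτ : HasData τ c' p') :
    HasData (σ * τ) (c + c') (p + p'.comp (shiftP c)) := by
  obtain ⟨hσx, hσy⟩ := hσ
  obtain ⟨hτx, hτy⟩ := hτ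
  constructor
  · rw [AlgEquiv.mul_apply, hτx, map_add σ, hσx, AlgEquiv.commutes,
      map_add (algebraMap K 𝕃)]
    ring
  · rw [AlgEquiv.mul_apply, hτy, map_add σ, hσy, map_paeval, hσx, ← aeval_shiftP,
      map_add (Polynomial.aeval (genX K))]
    ring

theorem HasData.inv {σ : 𝕃 ≃ₐ[K] 𝕃} {c : K} {p : Polynomial K} (h : HasData σ c p) :
    HasData σ⁻¹ (-c) (-(p.comp (shiftP (-c)))) := by
  obtain ⟨hx, hy⟩ := h
  constructor
  · apply σ.injective
    rw [show σ (σ⁻¹ (genX K)) = genX K from σ.apply_symm_apply _, map_add σ, hx,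
      AlgEquiv.commutes, map_neg (algebraMap K 𝕃)]
    ring
  · apply σ.injective
    rw [show σ (σ⁻¹ (genY K)) = genY K from σ.apply_symm_apply _, map_add σ, hy,
      map_neg (Polynomial.aeval (R := K) (genX K)) (p.comp (shiftP (-c))), map_neg σ, map_paeval, hx, ← aeval_shiftP,
      comp_shiftP_comp, add_neg_cancel, comp_shiftP_zero]
    ring

theorem HasData.commutator {σ τ : 𝕃 ≃ₐ[K] 𝕃} {c c' : K} {p q : Polynomial K}
    (hσ : HasData σ c p) (hτ : HasData τ c' q) :
    HasData ⁅τ, σ⁆ 0 ((p.comp (shiftP c') - p) - (q.comp (shiftP c) - q)) := by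
  have h1 : ⁅τ, σ⁆ = (τ * σ) * (σ * τ)⁻¹ := by group
  have hw := (hτ.mul hσ).mul ((hσ.mul hτ).inv)
  rw [← h1] at hw
  rw [show c' + c + -(c + c') = (0 : K) from by ring] at hw
  have hpoly : q + p.comp (shiftP c') +
      (-((p + q.comp (shiftP c)).comp (shiftP (-(c + c'))))).comp (shiftP (c' + c)) =
      (p.comp (shiftP c') - p) - (q.comp (shiftP c) - q) := by
    rw [Polynomial.neg_comp, comp_shiftP_comp,
      show c' + c + -(c + c') = (0 : K) from by ring, comp_shiftP_zero]
    ring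
  rw [hpoly] at hw
  exact hw

variable (K)

/-- Automorphisms `x ↦ x + c`, `y ↦ y + p(x)` with `deg p < m`. -/
noncomputable def cremonaSub (m : ℕ) : Subgroup (𝕃 ≃ₐ[K] 𝕃) where
  carrier := {σ | ∃ c p, (p : Polynomial K).degree < (m : WithBot ℕ) ∧ HasData σ c p}
  one_mem' := ⟨0, 0, by rw [Polynomial.degree_zero]; exact WithBot.bot_lt_coe m, HasData.one⟩
  mul_mem' := by
    rintro σ τ ⟨c, p, hp, hσ⟩ ⟨c', p', hp', hτ⟩
    refine ⟨c + c', p + p'.comp (shiftP c), ?_, hσ.mul hτ⟩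
    refine (Polynomial.degree_add_le _ _).trans_lt (max_lt hp ?_)
    rw [degree_comp_shiftP]
    exact hp'
  inv_mem' := by
    rintro σ ⟨c, p, hp, h⟩
    refine ⟨-c, -(p.comp (shiftP (-c))), ?_, h.inv⟩
    rw [Polynomial.degree_neg, degree_comp_shiftP]
    exact hp

/-- Automorphisms fixing `x` with `y ↦ y + p(x)`, `deg p < k`. -/
noncomputable def cremonaFix (k : ℕ) : Subgroup (𝕃 ≃ₐ[K] 𝕃) where
  carrier := {σ | ∃ p : Polynomial K, p.degree < (k : WithBot ℕ) ∧ HasData σ 0 p}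
  one_mem' := ⟨0, by rw [Polynomial.degree_zero]; exact WithBot.bot_lt_coe k, HasData.one⟩
  mul_mem' := by
    rintro σ τ ⟨p, hp, hσ⟩ ⟨p', hp', hτ⟩
    have h := hσ.mul hτ
    rw [add_zero] at h
    refine ⟨p + p'.comp (shiftP 0), ?_, h⟩
    refine (Polynomial.degree_add_le _ _).trans_lt (max_lt hp ?_)
    rw [degree_comp_shiftP]
    exact hp'
  inv_mem' := by
    rintro σ ⟨p, hp, h⟩
    have h' := h.inv
    rw [neg_zero] at h'
    refine ⟨_, ?_, h'⟩
    rw [Polynomial.degree_neg, degree_comp_shiftP]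
    exact hp

theorem cremona_lcs_le (n : ℕ) (j : ℕ) :
    Subgroup.lowerCentralSeries (⊤ : Subgroup ↥(cremonaSub K (n + 1))) (j + 1) ≤
      (cremonaFix K (n - j)).subgroupOf (cremonaSub K (n + 1)) := by
  induction j with
  | zero =>
    rw [lowerCentralSeries_succ, Subgroup.commutator_def]
    refine (Subgroup.closure_le _).mpr ?_
    rintro x ⟨g, -, h, -, rfl⟩
    show g * h * g⁻¹ * h⁻¹ ∈ _
    obtain ⟨c', q, hq, hg⟩ := g.2
    obtain ⟨c, p, hp, hh⟩ := h.2
    rw [SetLike.mem_coe, Subgroup.mem_subgroupOf]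
    have hcoe : ((g * h * g⁻¹ * h⁻¹ : ↥(cremonaSub K (n + 1))) : 𝕃 ≃ₐ[K] 𝕃)
        = ⁅(g : 𝕃 ≃ₐ[K] 𝕃), (h : 𝕃 ≃ₐ[K] 𝕃)⁆ := rfl
    rw [hcoe]
    have hcomm : HasData ⁅(g : 𝕃 ≃ₐ[K] 𝕃), (h : 𝕃 ≃ₐ[K] 𝕃)⁆ 0
        ((p.comp (shiftP c') - p) - (q.comp (shiftP c) - q)) := hh.commutator hg
    refine ⟨_, ?_, hcomm⟩
    rw [Nat.sub_zero]
    refine (Polynomial.degree_sub_le _ _).trans_lt (max_lt ?_ ?_)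
    · have := degree_comp_shiftP_sub_lt p c' (n + 1) hp
      simpa using this
    · have := degree_comp_shiftP_sub_lt q c (n + 1) hq
      simpa using this
  | succ j ih =>
    rw [lowerCentralSeries_succ, Subgroup.commutator_def]
    refine (Subgroup.closure_le _).mpr ?_
    rintro x ⟨g, hg, h, -, rfl⟩
    show g * h * g⁻¹ * h⁻¹ ∈ _
    obtain ⟨q, hq, hgd⟩ := Subgroup.mem_subgroupOf.mp (ih hg)
    obtain ⟨c, p, hp, hh⟩ := h.2
    rw [SetLike.mem_coe, Subgroup.mem_subgroupOf]
    have hcoe : ((g * h * g⁻¹ * h⁻¹ : ↥(cremonaSub K (n + 1))) : 𝕃 ≃ₐ[K] 𝕃)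
        = ⁅(g : 𝕃 ≃ₐ[K] 𝕃), (h : 𝕃 ≃ₐ[K] 𝕃)⁆ := rfl
    rw [hcoe]
    have hcomm : HasData ⁅(g : 𝕃 ≃ₐ[K] 𝕃), (h : 𝕃 ≃ₐ[K] 𝕃)⁆ 0
        ((p.comp (shiftP 0) - p) - (q.comp (shiftP c) - q)) := hh.commutator hgd
    refine ⟨_, ?_, hcomm⟩
    rw [comp_shiftP_zero, sub_self, zero_sub, Polynomial.degree_neg]
    have := degree_comp_shiftP_sub_lt q c (n - j) hq
    rwa [Nat.sub_sub] at this

end Aux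

theorem statement0 (K : Type*) [Field K] (n : ℕ) (hn : 1 ≤ n)
    (s a : CremonaField K ≃ₐ[K] CremonaField K)
    (hsx : s (genX K) = genX K + 1) (hsy : s (genY K) = genY K)
    (hax : a (genX K) = genX K) (hay : a (genY K) = genY K + genX K ^ n) :
    ∃ hN : Group.IsNilpotent (Subgroup.closure {s, a} : Subgroup (CremonaField K ≃ₐ[K] CremonaField K)),
      @Group.nilpotencyClass (Subgroup.closure {s, a} : Subgroup (CremonaField K ≃ₐ[K] CremonaField K)) _ ≤ n + 1 := by
  set G := cremonaSub K (n + 1) with hG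
  have hs : s ∈ G := by
    refine ⟨1, 0, by rw [Polynomial.degree_zero]; exact WithBot.bot_lt_coe (n + 1), ?_, ?_⟩
    · rw [hsx, map_one]
    · simpa using hsy
  have ha : a ∈ G := by
    refine ⟨0, Polynomial.X ^ n, ?_, ?_, ?_⟩
    · rw [Polynomial.degree_X_pow]
      exact_mod_cast Nat.lt_succ_self n
    · rw [hax, map_zero, add_zero]
    · rw [hay, map_pow, Polynomial.aeval_X]
  have hle : Subgroup.closure {s, a} ≤ G :=
    (Subgroup.closure_le _).mpr
      (Set.insert_subset_iff.mpr ⟨hs, Set.singleton_subset_iff.mpr ha⟩)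
  have hbot : Subgroup.lowerCentralSeries (⊤ : Subgroup ↥G) (n + 1) = ⊥ := by
    have h1 := cremona_lcs_le K n n
    rw [Nat.sub_self] at h1
    rw [eq_bot_iff]
    refine h1.trans ?_
    intro g hg
    rw [Subgroup.mem_subgroupOf] at hg
    obtain ⟨p, hp, hd⟩ := hg
    have hp0 : p = 0 := Polynomial.degree_eq_bot.mp (Nat.WithBot.lt_zero_iff.mp hp)
    subst hp0
    have hone : (g : CremonaField K ≃ₐ[K] CremonaField K) = 1 := by
      apply cremona_ext
      · rw [hd.1]; simp
      · rw [hd.2]; simp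
    exact Subgroup.mem_bot.mpr (Subtype.ext hone)
  haveI hNG : Group.IsNilpotent ↥G := nilpotent_iff_lowerCentralSeries.mpr ⟨n + 1, hbot⟩
  have hclG : Group.nilpotencyClass ↥G ≤ n + 1 :=
    lowerCentralSeries_eq_bot_iff_nilpotencyClass_le.mp hbot
  let e := Subgroup.subgroupOfEquivOfLe hle
  haveI h2 : Group.IsNilpotent ↥((Subgroup.closure {s, a}).subgroupOf G) :=
    Subgroup.isNilpotent _
  have hnil : Group.IsNilpotent ↥(Subgroup.closure {s, a}) :=
    nilpotent_of_surjective e.toMonoidHom e.surjective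
  refine ⟨hnil, ?_⟩
  calc Group.nilpotencyClass ↥(Subgroup.closure {s, a})
      ≤ Group.nilpotencyClass ↥((Subgroup.closure {s, a}).subgroupOf G) :=
        nilpotencyClass_le_of_surjective e.toMonoidHom e.surjective
    _ ≤ Group.nilpotencyClass ↥G := Subgroup.nilpotencyClass_le _
    _ ≤ n + 1 := hclG
end

section
/- Let K be a field of characteristic zero and n ≥ 1. In the planar Cremona group Cr₂(K), let s be the automorphism with s(x) = x + 1, s(y) = y, and a the automorphism with a(x) = x, a(y) = y + xⁿ. Then the subgroup Γₙ generated by s and a is nilpotent of nilpotency class exactly n + 1; in particular Γₙ is not nilpotent of class n. -/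
set_option maxHeartbeats 1000000
set_option synthInstance.maxHeartbeats 400000

open MvPolynomial

open scoped commutatorElement

namespace CremonaProof

open Polynomial

variable {K : Type*} [Field K]

theorem degree_comp_shift (p : K[X]) (c : K) :
    (p.comp (Polynomial.X + Polynomial.C c)).degree = p.degree := by
  rcases eq_or_ne p 0 with rfl | hp
  · simp
  · have hlc : (p.comp (Polynomial.X + Polynomial.C c)).leadingCoeff = p.leadingCoeff := by
      rw [leadingCoeff_comp (by simp [natDegree_X_add_C]), (monic_X_add_C c).leadingCoeff,
        one_pow, mul_one]
    have hq : p.comp (Polynomial.X + Polynomial.C c) ≠ 0 := by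
      intro h0
      exact hp (leadingCoeff_eq_zero.mp (by rw [← hlc, h0, leadingCoeff_zero]))
    rw [degree_eq_natDegree hq, degree_eq_natDegree hp, natDegree_comp, natDegree_X_add_C,
      mul_one]

theorem leadingCoeff_comp_shift (p : K[X]) (c : K) :
    (p.comp (Polynomial.X + Polynomial.C c)).leadingCoeff = p.leadingCoeff := by
  rw [leadingCoeff_comp (by simp [natDegree_X_add_C]), (monic_X_add_C c).leadingCoeff,
    one_pow, mul_one]

theorem degree_shift_sub {p : K[X]} {d : ℕ} (c : K) (h : p.degree < ((d + 1 : ℕ) : WithBot ℕ)) :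
    (p.comp (Polynomial.X + Polynomial.C c) - p).degree < (d : WithBot ℕ) := by
  rcases eq_or_ne p 0 with rfl | hp
  · rw [zero_comp, sub_self, degree_zero]
    exact WithBot.bot_lt_coe d
  rcases eq_or_ne (p.comp (Polynomial.X + Polynomial.C c)) p with he | hne
  · rw [he, sub_self, degree_zero]
    exact WithBot.bot_lt_coe d
  · have hq : p.comp (Polynomial.X + Polynomial.C c) ≠ 0 := by
      intro h0
      exact hp (leadingCoeff_eq_zero.mp
        (by rw [← leadingCoeff_comp_shift p c, h0, leadingCoeff_zero]))
    have h1 : (p.comp (Polynomial.X + Polynomial.C c) - p).degree <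
        (p.comp (Polynomial.X + Polynomial.C c)).degree :=
      degree_sub_lt (degree_comp_shift p c) hq (leadingCoeff_comp_shift p c)
    have h2 : p.natDegree ≤ d := by
      have := (natDegree_lt_iff_degree_lt hp).mpr h
      omega
    calc (p.comp (Polynomial.X + Polynomial.C c) - p).degree
        < (p.comp (Polynomial.X + Polynomial.C c)).degree := h1
      _ = p.degree := degree_comp_shift p c
      _ = (p.natDegree : WithBot ℕ) := degree_eq_natDegree hp
      _ ≤ (d : WithBot ℕ) := by exact_mod_cast h2

theorem aeval_comp_shift (t : CremonaField K) (c : K) (p : K[X]) :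
    Polynomial.aeval t (p.comp (Polynomial.X + Polynomial.C c)) =
      Polynomial.aeval (t + algebraMap K (CremonaField K) c) p := by
  rw [aeval_comp]
  simp

theorem aeval_comp_int (t : CremonaField K) (m : ℤ) (p : K[X]) :
    Polynomial.aeval t (p.comp (Polynomial.X + ((m : ℤ) : K[X]))) =
      Polynomial.aeval (t + ((m : ℤ) : CremonaField K)) p := by
  rw [aeval_comp]
  simp

theorem ext_aux {σ τ : CremonaField K ≃ₐ[K] CremonaField K}
    (hx : σ (genX K) = τ (genX K)) (hy : σ (genY K) = τ (genY K)) : σ = τ := by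
  have key : (σ : CremonaField K →+* CremonaField K) = (τ : CremonaField K →+* CremonaField K) := by
    apply IsLocalization.ringHom_ext (nonZeroDivisors (MvPolynomial (Fin 2) K))
    apply MvPolynomial.ringHom_ext
    · intro r
      simp only [RingHom.comp_apply]
      rw [← MvPolynomial.algebraMap_eq, ← IsScalarTower.algebraMap_apply]
      simpa using (σ.commutes r).trans (τ.commutes r).symm
    · intro i
      fin_cases i
      · simpa [genX] using hx
      · simpa [genY] using hy
  exact AlgEquiv.ext fun z => RingHom.congr_fun key z

theorem apply_aeval (σ : CremonaField K ≃ₐ[K] CremonaField K) (t : CremonaField K) (p : K[X]) :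
    σ (Polynomial.aeval t p) = Polynomial.aeval (σ t) p :=
  (Polynomial.aeval_algHom_apply σ t p).symm

theorem apply_inv_self (σ : CremonaField K ≃ₐ[K] CremonaField K) (t : CremonaField K) :
    σ (σ⁻¹ t) = t := by
  rw [← AlgEquiv.mul_apply, mul_inv_cancel, AlgEquiv.one_apply]

theorem int_shift (t : CremonaField K) (m : ℤ) :
    t + ((m : ℤ) : CremonaField K) = t + algebraMap K (CremonaField K) ((m : ℤ) : K) := by
  rw [map_intCast]

theorem inv_formula {σ : CremonaField K ≃ₐ[K] CremonaField K} {m : ℤ} {p : K[X]}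
    (hx : σ (genX K) = genX K + (m : CremonaField K))
    (hy : σ (genY K) = genY K + Polynomial.aeval (genX K) p) :
    σ⁻¹ (genX K) = genX K - (m : CremonaField K) ∧
      σ⁻¹ (genY K) = genY K - Polynomial.aeval (genX K - (m : CremonaField K)) p := by
  have hfix : σ (genX K - (m : CremonaField K)) = genX K := by
    rw [map_sub, hx, map_intCast]; ring
  constructor
  · apply σ.injective
    rw [apply_inv_self, hfix]
  · apply σ.injective
    rw [apply_inv_self, map_sub, hy, apply_aeval, hfix]
    ring

theorem commutator_formula {σ τ : CremonaField K ≃ₐ[K] CremonaField K} {m₁ m₂ : ℤ} {p q : K[X]}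
    (hx1 : σ (genX K) = genX K + (m₁ : CremonaField K))
    (hy1 : σ (genY K) = genY K + Polynomial.aeval (genX K) p)
    (hx2 : τ (genX K) = genX K + (m₂ : CremonaField K))
    (hy2 : τ (genY K) = genY K + Polynomial.aeval (genX K) q) :
    ⁅σ, τ⁆ (genX K) = genX K ∧
      ⁅σ, τ⁆ (genY K) = genY K + Polynomial.aeval (genX K)
        ((p - p.comp (Polynomial.X + Polynomial.C ((m₂ : ℤ) : K))) +
          (q.comp (Polynomial.X + Polynomial.C ((m₁ : ℤ) : K)) - q)) := by
  obtain ⟨hix1, hiy1⟩ := inv_formula hx1 hy1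
  obtain ⟨hix2, hiy2⟩ := inv_formula hx2 hy2
  have hc : ∀ t, ⁅σ, τ⁆ t = σ (τ (σ⁻¹ (τ⁻¹ t))) := by
    intro t
    rw [commutatorElement_def]
    simp [AlgEquiv.mul_apply]
  constructor
  · rw [hc, hix2]
    simp only [map_sub, map_add, map_intCast, hix1, hx2, hx1, apply_aeval]
    ring
  · rw [hc, hiy2]
    simp only [map_sub, map_add, map_intCast, hix1, hiy1, hx2, hy2, hx1, hy1, apply_aeval, hix2]
    have e1 : genX K + (m₁ : CremonaField K) + (m₂ : CremonaField K) - (m₁ : CremonaField K)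
        = genX K + (m₂ : CremonaField K) := by ring
    have e2 : genX K + (m₂ : CremonaField K) - (m₂ : CremonaField K) = genX K := by ring
    rw [e1, e2, aeval_comp_int, aeval_comp_int]
    ring

noncomputable def delta (p : K[X]) : K[X] := p.comp (Polynomial.X + Polynomial.C 1) - p

theorem delta_add (p q : K[X]) : delta (p + q) = delta p + delta q := by
  simp only [delta, add_comp]; ring

theorem delta_C_mul (c : K) (p : K[X]) :
    delta (Polynomial.C c * p) = Polynomial.C c * delta p := by
  simp only [delta, mul_comp, C_comp]; ring

theorem delta_iter_add (k : ℕ) (p q : K[X]) : delta^[k] (p + q) = delta^[k] p + delta^[k] q := by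
  induction k generalizing p q with
  | zero => simp
  | succ k ih => simp only [Function.iterate_succ_apply, delta_add, ih]

theorem delta_iter_C_mul (k : ℕ) (c : K) (p : K[X]) :
    delta^[k] (Polynomial.C c * p) = Polynomial.C c * delta^[k] p := by
  induction k generalizing p with
  | zero => simp
  | succ k ih => simp only [Function.iterate_succ_apply, delta_C_mul, ih]

theorem delta_degree {p : K[X]} {d : ℕ} (h : p.degree < ((d + 1 : ℕ) : WithBot ℕ)) :
    (delta p).degree < (d : WithBot ℕ) :=
  degree_shift_sub 1 h

theorem delta_iter_zero : ∀ (d : ℕ) (p : K[X]), p.degree < (d : WithBot ℕ) → delta^[d] p = 0 := by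
  intro d
  induction d with
  | zero =>
    intro p hp
    have : p = 0 := by
      rw [← Polynomial.degree_eq_bot]
      exact Nat.WithBot.lt_zero_iff.mp (by exact_mod_cast hp)
    simpa using this
  | succ d ih =>
    intro p hp
    rw [Function.iterate_succ_apply]
    exact ih _ (delta_degree hp)

theorem delta_iter_pow (m : ℕ) :
    delta^[m] ((Polynomial.X : K[X]) ^ m) = Polynomial.C (m.factorial : K) := by
  induction m with
  | zero => simp
  | succ m ih =>
    have hdec : delta ((Polynomial.X : K[X]) ^ (m + 1)) =
        Polynomial.C ((m + 1 : ℕ) : K) * Polynomial.X ^ m +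
          ∑ k ∈ Finset.range m, (Polynomial.X : K[X]) ^ k * ((m + 1).choose k : K[X]) := by
      rw [delta, pow_comp, X_comp, add_pow]
      simp only [map_one, one_pow, mul_one]
      rw [Finset.sum_range_succ, Finset.sum_range_succ, Nat.choose_self, Nat.choose_succ_self_right]
      rw [Polynomial.C_eq_natCast]
      push_cast
      ring
    have hr : (∑ k ∈ Finset.range m, (Polynomial.X : K[X]) ^ k *
        ((m + 1).choose k : K[X])).degree < (m : WithBot ℕ) := by
      apply lt_of_le_of_lt (degree_sum_le _ _)
      rw [Finset.sup_lt_iff (by exact WithBot.bot_lt_coe m)]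
      intro k hk
      apply lt_of_le_of_lt (degree_mul_le _ _)
      rw [degree_X_pow, ← Polynomial.C_eq_natCast, ]
      calc (k : WithBot ℕ) + (Polynomial.C (((m + 1).choose k : K))).degree
          ≤ (k : WithBot ℕ) + 0 := add_le_add_right degree_C_le _
        _ = (k : WithBot ℕ) := add_zero _
        _ < (m : WithBot ℕ) := by exact_mod_cast Finset.mem_range.mp hk
    rw [Function.iterate_succ_apply, hdec, delta_iter_add, delta_iter_C_mul, ih,
      delta_iter_zero m _ hr, add_zero, ← Polynomial.C_mul]
    congr 1
    rw [Nat.factorial_succ]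
    push_cast
    ring

theorem degree_comp_int (p : K[X]) (m : ℤ) :
    (p.comp (Polynomial.X + ((m : ℤ) : K[X]))).degree = p.degree := by
  rw [← Polynomial.C_eq_intCast]
  exact degree_comp_shift p _

variable (K) in
noncomputable def fullS (n : ℕ) : Subgroup (CremonaField K ≃ₐ[K] CremonaField K) where
  carrier := {σ | ∃ (m : ℤ) (p : K[X]), p.degree < ((n + 1 : ℕ) : WithBot ℕ) ∧
    σ (genX K) = genX K + (m : CremonaField K) ∧
    σ (genY K) = genY K + Polynomial.aeval (genX K) p}
  one_mem' := ⟨0, 0, by simpa using WithBot.bot_lt_coe (n + 1), by simp, by simp⟩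
  mul_mem' := by
    rintro σ τ ⟨m1, p1, hd1, hx1, hy1⟩ ⟨m2, p2, hd2, hx2, hy2⟩
    refine ⟨m1 + m2, p1 + p2.comp (Polynomial.X + ((m1 : ℤ) : K[X])), ?_, ?_, ?_⟩
    · refine lt_of_le_of_lt (degree_add_le _ _) (max_lt hd1 ?_)
      rw [degree_comp_int]
      exact hd2
    · rw [AlgEquiv.mul_apply, hx2, map_add, hx1, map_intCast]
      push_cast
      ring
    · rw [AlgEquiv.mul_apply, hy2, map_add, hy1, apply_aeval, hx1]
      simp only [map_add]
      rw [aeval_comp_int]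
      ring
  inv_mem' := by
    rintro σ ⟨m, p, hd, hx, hy⟩
    obtain ⟨hix, hiy⟩ := inv_formula hx hy
    refine ⟨-m, -(p.comp (Polynomial.X + ((-m : ℤ) : K[X]))), ?_, ?_, ?_⟩
    · rw [degree_neg, degree_comp_int]
      exact hd
    · rw [hix]
      push_cast
      ring
    · rw [hiy, map_neg, aeval_comp_int]
      push_cast
      ring_nf

variable (K) in
noncomputable def tameS (d : ℕ) : Subgroup (CremonaField K ≃ₐ[K] CremonaField K) where
  carrier := {σ | ∃ p : K[X], p.degree < (d : WithBot ℕ) ∧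
    σ (genX K) = genX K ∧ σ (genY K) = genY K + Polynomial.aeval (genX K) p}
  one_mem' := ⟨0, by rw [Polynomial.degree_zero]; exact WithBot.bot_lt_coe d, by simp, by simp⟩
  mul_mem' := by
    rintro σ τ ⟨p1, hd1, hx1, hy1⟩ ⟨p2, hd2, hx2, hy2⟩
    refine ⟨p1 + p2, lt_of_le_of_lt (degree_add_le _ _) (max_lt hd1 hd2), ?_, ?_⟩
    · rw [AlgEquiv.mul_apply, hx2, hx1]
    · rw [AlgEquiv.mul_apply, hy2, map_add, hy1, apply_aeval, hx1, map_add]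
      ring
  inv_mem' := by
    rintro σ ⟨p, hd, hx, hy⟩
    refine ⟨-p, by rwa [degree_neg], ?_, ?_⟩
    · apply σ.injective
      rw [apply_inv_self, hx]
    · apply σ.injective
      rw [apply_inv_self]
      simp only [map_add, map_neg, apply_aeval, hy, hx]
      ring

theorem mem_fullS {n : ℕ} {σ : CremonaField K ≃ₐ[K] CremonaField K} :
    σ ∈ fullS K n ↔ ∃ (m : ℤ) (p : K[X]), p.degree < ((n + 1 : ℕ) : WithBot ℕ) ∧
      σ (genX K) = genX K + (m : CremonaField K) ∧
      σ (genY K) = genY K + Polynomial.aeval (genX K) p := Iff.rfl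

theorem mem_tameS {d : ℕ} {σ : CremonaField K ≃ₐ[K] CremonaField K} :
    σ ∈ tameS K d ↔ ∃ p : K[X], p.degree < (d : WithBot ℕ) ∧
      σ (genX K) = genX K ∧ σ (genY K) = genY K + Polynomial.aeval (genX K) p := Iff.rfl

theorem degree_sub_shift_int {p : K[X]} {d : ℕ} (m : ℤ)
    (h : p.degree < ((d + 1 : ℕ) : WithBot ℕ)) :
    (p - p.comp (Polynomial.X + Polynomial.C ((m : ℤ) : K))).degree < (d : WithBot ℕ) := by
  rw [← neg_sub, degree_neg]
  exact degree_shift_sub _ h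

theorem commutator_mem_tame_base {n : ℕ} {σ τ : CremonaField K ≃ₐ[K] CremonaField K}
    (hσ : σ ∈ fullS K n) (hτ : τ ∈ fullS K n) : ⁅σ, τ⁆ ∈ tameS K n := by
  obtain ⟨m1, p, hdp, hx1, hy1⟩ := hσ
  obtain ⟨m2, q, hdq, hx2, hy2⟩ := hτ
  obtain ⟨hcx, hcy⟩ := commutator_formula hx1 hy1 hx2 hy2
  exact ⟨_, lt_of_le_of_lt (degree_add_le _ _) (max_lt (degree_sub_shift_int m2 hdp)
    (degree_shift_sub _ hdq)), hcx, hcy⟩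

theorem commutator_mem_tame_step {n d : ℕ} {σ τ : CremonaField K ≃ₐ[K] CremonaField K}
    (hσ : σ ∈ tameS K (d + 1)) (hτ : τ ∈ fullS K n) : ⁅σ, τ⁆ ∈ tameS K d := by
  obtain ⟨p, hdp, hx1, hy1⟩ := hσ
  obtain ⟨m2, q, hdq, hx2, hy2⟩ := hτ
  have hx1' : σ (genX K) = genX K + ((0 : ℤ) : CremonaField K) := by
    rw [hx1]; simp
  obtain ⟨hcx, hcy⟩ := commutator_formula hx1' hy1 hx2 hy2
  have hq0 : q.comp (Polynomial.X + Polynomial.C (((0 : ℤ) : K))) - q = 0 := by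
    simp
  rw [hq0, add_zero] at hcy
  exact ⟨_, degree_sub_shift_int m2 hdp, hcx, hcy⟩

end CremonaProof

theorem statement1 (K : Type*) [Field K] [CharZero K] (n : ℕ) (hn : 1 ≤ n)
    (s a : CremonaField K ≃ₐ[K] CremonaField K)
    (hsx : s (genX K) = genX K + 1) (hsy : s (genY K) = genY K)
    (hax : a (genX K) = genX K) (hay : a (genY K) = genY K + genX K ^ n) :
    ∃ hN : Group.IsNilpotent (Subgroup.closure {s, a} : Subgroup (CremonaField K ≃ₐ[K] CremonaField K)),
      @Group.nilpotencyClass (Subgroup.closure {s, a} : Subgroup (CremonaField K ≃ₐ[K] CremonaField K)) _ = n + 1 := by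
  classical
  have hsmem : s ∈ CremonaProof.fullS K n :=
    ⟨1, 0, by rw [Polynomial.degree_zero]; exact WithBot.bot_lt_coe _,
      by rw [hsx, Int.cast_one], by rw [hsy]; simp⟩
  have hamem : a ∈ CremonaProof.fullS K n :=
    ⟨0, Polynomial.X ^ n, by rw [Polynomial.degree_X_pow]; exact_mod_cast Nat.lt_succ_self n,
      by rw [hax, Int.cast_zero, add_zero], by rw [hay, Polynomial.aeval_X_pow]⟩
  set Γ := (Subgroup.closure {s, a} : Subgroup (CremonaField K ≃ₐ[K] CremonaField K)) with hΓdef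
  have hsub : Γ ≤ CremonaProof.fullS K n := by
    rw [hΓdef, Subgroup.closure_le]
    rintro g (rfl | rfl)
    · exact hsmem
    · exact hamem
  have hLCSrw : ∀ k : ℕ, lowerCentralSeries (⊤ : Subgroup Γ) (k + 1) = ⁅lowerCentralSeries (⊤ : Subgroup Γ) k, ⊤⁆ :=
    fun _ => rfl
  have hcomap : ∀ k : ℕ, k ≤ n →
      lowerCentralSeries (⊤ : Subgroup Γ) (k + 1) ≤ (CremonaProof.tameS K (n - k)).comap Γ.subtype := by
    intro k
    induction k with
    | zero =>
      intro _
      rw [hLCSrw 0, Subgroup.commutator_le]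
      intro u hu v hv
      rw [Subgroup.mem_comap, map_commutatorElement, Nat.sub_zero]
      exact CremonaProof.commutator_mem_tame_base (hsub u.2) (hsub v.2)
    | succ k ih =>
      intro hk
      rw [hLCSrw (k + 1), Subgroup.commutator_le]
      intro u hu v hv
      rw [Subgroup.mem_comap, map_commutatorElement]
      have hu' := ih (Nat.le_of_succ_le hk) hu
      rw [Subgroup.mem_comap] at hu'
      have hnk : n - k = (n - (k + 1)) + 1 := by omega
      rw [hnk] at hu'
      exact CremonaProof.commutator_mem_tame_step hu' (hsub v.2)
  have hbot : lowerCentralSeries (⊤ : Subgroup Γ) (n + 1) = ⊥ := by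
    rw [eq_bot_iff]
    intro g hg
    have hT := hcomap n le_rfl hg
    rw [Subgroup.mem_comap, Nat.sub_self] at hT
    obtain ⟨p, hdp, hgx, hgy⟩ := hT
    have hp0 : p = 0 := by
      rw [← Polynomial.degree_eq_bot]
      exact Nat.WithBot.lt_zero_iff.mp (by exact_mod_cast hdp)
    rw [hp0, map_zero, add_zero] at hgy
    have hg1 : Γ.subtype g = 1 :=
      CremonaProof.ext_aux (by simpa using hgx) (by simpa using hgy)
    rw [Subgroup.mem_bot]
    exact Subtype.ext (by simpa using hg1)
  have hnil : Group.IsNilpotent Γ := nilpotent_iff_lowerCentralSeries.mpr ⟨n + 1, hbot⟩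
  have hsmem' : s ∈ Γ := Subgroup.subset_closure (by simp)
  have hamem' : a ∈ Γ := Subgroup.subset_closure (by simp)
  set s' : Γ := ⟨s, hsmem'⟩ with hs'def
  set a' : Γ := ⟨a, hamem'⟩ with ha'def
  set c : ℕ → Γ := fun k => (fun g => ⁅s', g⁆)^[k] a' with hcdef
  have hcs : ∀ k, c (k + 1) = ⁅s', c k⁆ := fun k => Function.iterate_succ_apply' _ _ _
  have hmem : ∀ k, c k ∈ lowerCentralSeries (⊤ : Subgroup Γ) k := by
    intro k
    induction k with
    | zero => exact Subgroup.mem_top _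
    | succ k ih =>
      rw [hcs, hLCSrw k, Subgroup.commutator_comm]
      exact Subgroup.commutator_mem_commutator (Subgroup.mem_top _) ih
  have hact : ∀ k, ((c k : CremonaField K ≃ₐ[K] CremonaField K)) (genX K) = genX K ∧
      (c k : CremonaField K ≃ₐ[K] CremonaField K) (genY K) = genY K +
        Polynomial.aeval (genX K) (CremonaProof.delta^[k] ((Polynomial.X : Polynomial K) ^ n)) := by
    intro k
    induction k with
    | zero =>
      refine ⟨hax, ?_⟩
      rw [show ((c 0 : CremonaField K ≃ₐ[K] CremonaField K)) = a from rfl, hay]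
      simp
    | succ k ih =>
      have hcoe : ((c (k + 1) : Γ) : CremonaField K ≃ₐ[K] CremonaField K) =
          ⁅s, (c k : CremonaField K ≃ₐ[K] CremonaField K)⁆ := by
        rw [hcs]
        exact map_commutatorElement Γ.subtype s' (c k)
      have hsx' : s (genX K) = genX K + ((1 : ℤ) : CremonaField K) := by
        rw [hsx, Int.cast_one]
      have hsy' : s (genY K) = genY K + Polynomial.aeval (genX K) (0 : Polynomial K) := by
        rw [hsy]; simp
      have hcx' : (c k : CremonaField K ≃ₐ[K] CremonaField K) (genX K) =
          genX K + ((0 : ℤ) : CremonaField K) := by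
        rw [ih.1]; simp
      obtain ⟨h1, h2⟩ := CremonaProof.commutator_formula hsx' hsy' hcx' ih.2
      rw [hcoe]
      refine ⟨h1, ?_⟩
      rw [h2]
      congr 1
      congr 1
      rw [Function.iterate_succ_apply']
      simp [CremonaProof.delta, Int.cast_one]
  have hne : c n ≠ 1 := by
    intro h1
    have h2 := (hact n).2
    rw [h1, CremonaProof.delta_iter_pow] at h2
    simp only [OneMemClass.coe_one, AlgEquiv.one_apply, Polynomial.aeval_C] at h2
    have h3 : algebraMap K (CremonaField K) ((n.factorial : K)) = 0 := (left_eq_add.mp h2)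
    have h4 : (n.factorial : K) = 0 :=
      (algebraMap K (CremonaField K)).injective (by rw [h3, map_zero])
    exact Nat.cast_ne_zero.mpr n.factorial_ne_zero h4
  have hnotbot : lowerCentralSeries (⊤ : Subgroup Γ) n ≠ ⊥ := by
    intro hb
    apply hne
    have hm := hmem n
    rw [hb, Subgroup.mem_bot] at hm
    exact hm
  refine ⟨hnil, ?_⟩
  haveI := hnil
  have hle : Group.nilpotencyClass Γ ≤ n + 1 :=
    lowerCentralSeries_eq_bot_iff_nilpotencyClass_le.mp hbot
  have hgt : ¬ Group.nilpotencyClass Γ ≤ n := fun h =>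
    hnotbot (lowerCentralSeries_eq_bot_iff_nilpotencyClass_le.mpr h)
  omega
end

section
/- Let K be a field of characteristic zero. In the planar Cremona group Cr₂(K), let s be the automorphism with s(x) = x + 1, s(y) = y, and for each n ≥ 0 let aₙ be the automorphism with aₙ(x) = x, aₙ(y) = y + xⁿ. Let Γ_∞ be the subgroup of Cr₂(K) generated by s together with all aₙ, n ≥ 0. Then Γ_∞ is locally nilpotent but not nilpotent: every finitely generated subgroup of Γ_∞ is nilpotent, while Γ_∞ itself is not nilpotent. -/
open MvPolynomial

namespace Statement8Aux

open scoped commutatorElement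

open Polynomial

set_option maxHeartbeats 1000000
set_option synthInstance.maxHeartbeats 400000

variable {K : Type*} [Field K]

def IsT (m : ℤ) (P : Polynomial K) (σ : CremonaField K ≃ₐ[K] CremonaField K) : Prop :=
  σ (genX K) = genX K + (m : CremonaField K) ∧
  σ (genY K) = genY K + Polynomial.aeval (genX K) P

lemma shift_aeval (m : ℤ) (Q : K[X]) :
    Polynomial.aeval (genX K + (m : CremonaField K)) Q
      = Polynomial.aeval (genX K) (taylor (m : K) Q) := by
  rw [taylor_apply, aeval_comp, map_add, Polynomial.aeval_X, Polynomial.aeval_C, map_intCast]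

lemma map_aeval_genX {σ : CremonaField K ≃ₐ[K] CremonaField K} {m : ℤ}
    (h : σ (genX K) = genX K + (m : CremonaField K)) (Q : K[X]) :
    σ (Polynomial.aeval (genX K) Q) = Polynomial.aeval (genX K) (taylor (m : K) Q) := by
  rw [← Polynomial.aeval_algHom_apply, h, shift_aeval]

lemma IsT.one : IsT (K := K) 0 0 1 := by
  constructor <;> simp

lemma IsT.mul {σ τ : CremonaField K ≃ₐ[K] CremonaField K} {m m' : ℤ} {P Q : K[X]}
    (hσ : IsT m P σ) (hτ : IsT m' Q τ) :
    IsT (m + m') (P + taylor (m : K) Q) (σ * τ) := by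
  obtain ⟨h1, h2⟩ := hσ; obtain ⟨h3, h4⟩ := hτ
  constructor
  · rw [AlgEquiv.mul_apply, h3, map_add, h1, map_intCast]
    push_cast; ring
  · rw [AlgEquiv.mul_apply, h4, map_add, h2, map_aeval_genX h1, map_add]
    ring

lemma IsT.congr {σ : CremonaField K ≃ₐ[K] CremonaField K} {m m' : ℤ} {P Q : K[X]}
    (h : IsT m P σ) (hm : m = m') (hP : P = Q) : IsT m' Q σ := hm ▸ hP ▸ h

lemma IsT.inv {σ : CremonaField K ≃ₐ[K] CremonaField K} {m : ℤ} {P : K[X]}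
    (hσ : IsT m P σ) : IsT (-m) (-(taylor ((-m : ℤ) : K) P)) σ⁻¹ := by
  obtain ⟨h1, h2⟩ := hσ
  have hcancel : ∀ z : CremonaField K, σ (σ⁻¹ z) = z := fun z => by
    rw [← AlgEquiv.mul_apply, mul_inv_cancel, AlgEquiv.one_apply]
  constructor
  · apply σ.injective
    rw [hcancel, map_add, h1, map_intCast]
    push_cast; ring
  · apply σ.injective
    rw [hcancel, map_add, h2, map_aeval_genX h1, map_neg, taylor_taylor, map_neg]
    have : ((m : K) + ((-m : ℤ) : K)) = 0 := by push_cast; ring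
    rw [this, taylor_zero]
    ring

lemma IsT.commutator {σ τ : CremonaField K ≃ₐ[K] CremonaField K} {m m' : ℤ} {P Q : K[X]}
    (hσ : IsT m P σ) (hτ : IsT m' Q τ) :
    IsT 0 ((P - taylor (m' : K) P) + (taylor (m : K) Q - Q)) ⁅σ, τ⁆ := by
  have h := ((hσ.mul hτ).mul hσ.inv).mul hτ.inv
  rw [commutatorElement_def]
  refine h.congr (by ring) ?_
  rw [map_neg, map_neg, taylor_taylor, taylor_taylor]
  have c1 : (((m + m' : ℤ) : K) + ((-m : ℤ) : K)) = (m' : K) := by push_cast; ring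
  have c2 : (((m + m' + -m : ℤ) : K) + ((-m' : ℤ) : K)) = 0 := by push_cast; ring
  rw [c1, c2, taylor_zero]
  ring

theorem algEquiv_ext {σ τ : CremonaField K ≃ₐ[K] CremonaField K}
    (hx : σ (genX K) = τ (genX K)) (hy : σ (genY K) = τ (genY K)) : σ = τ := by
  have key : (σ : CremonaField K →+* CremonaField K)
      = (τ : CremonaField K →+* CremonaField K) := by
    apply IsLocalization.ringHom_ext (nonZeroDivisors (MvPolynomial (Fin 2) K))
    apply MvPolynomial.ringHom_ext
    · intro r
      simp only [RingHom.comp_apply]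
      have h1 : (algebraMap (MvPolynomial (Fin 2) K) (CremonaField K)) (MvPolynomial.C r)
          = algebraMap K (CremonaField K) r := by
        rw [IsScalarTower.algebraMap_apply K (MvPolynomial (Fin 2) K) (CremonaField K),
          MvPolynomial.algebraMap_eq]
      rw [h1]
      show σ _ = τ _
      rw [AlgEquiv.commutes, AlgEquiv.commutes]
    · intro i
      simp only [RingHom.comp_apply]
      fin_cases i
      · show σ _ = τ _; exact hx
      · show σ _ = τ _; exact hy
  exact AlgEquiv.ext fun z => RingHom.congr_fun key z


lemma taylor_ne_zero' {P : K[X]} (hP : P ≠ 0) (c : K) : taylor c P ≠ 0 := by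
  intro hh
  apply hP
  have h2 := congrArg (taylor (-c)) hh
  rwa [taylor_taylor, neg_add_cancel, taylor_zero, map_zero] at h2

lemma taylor_leadingCoeff (c : K) (P : K[X]) :
    (taylor c P).leadingCoeff = P.leadingCoeff := by
  rw [Polynomial.leadingCoeff, Polynomial.leadingCoeff, natDegree_taylor, taylor_coeff]
  have hh : hasseDeriv P.natDegree P = Polynomial.C (P.coeff P.natDegree) := by
    ext n
    rw [hasseDeriv_coeff]
    cases n with
    | zero => simp
    | succ n =>
      rw [coeff_eq_zero_of_natDegree_lt (by omega : P.natDegree < n + 1 + P.natDegree),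
        mul_zero, Polynomial.coeff_C]
      simp
  rw [hh, Polynomial.eval_C]

lemma degree_sub_taylor_lt [CharZero K] (P : K[X]) (c : K) {k : ℕ}
    (h : P.degree < (k : WithBot ℕ)) :
    (P - taylor c P).degree < ((k - 1 : ℕ) : WithBot ℕ) := by
  by_cases hP : P = 0
  · simp only [hP, map_zero, sub_zero, degree_zero]
    exact WithBot.bot_lt_coe _
  obtain ⟨k, rfl⟩ : ∃ k', k = k' + 1 := by
    cases k with
    | zero => exact absurd (by simpa using h : P.degree < 0) (not_lt.mpr (zero_le_degree_iff.mpr hP))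
    | succ k => exact ⟨k, rfl⟩
  have h0 : taylor c P ≠ 0 := taylor_ne_zero' hP c
  have hdeg : P.degree = (taylor c P).degree := by
    rw [degree_eq_natDegree h0, degree_eq_natDegree hP, natDegree_taylor]
  have hsub := degree_sub_lt hdeg hP (taylor_leadingCoeff c P).symm
  have hle : P.degree ≤ (k : WithBot ℕ) := by
    rw [degree_eq_natDegree hP] at h ⊢
    exact_mod_cast Nat.lt_succ_iff.mp (by exact_mod_cast h)
  simpa using lt_of_lt_of_le hsub hle


variable (K) in
def D [CharZero K] (N : ℕ) : Subgroup (CremonaField K ≃ₐ[K] CremonaField K) where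
  carrier := {σ | ∃ m : ℤ, ∃ P : K[X], P.natDegree ≤ N ∧ IsT m P σ}
  one_mem' := ⟨0, 0, by simp, IsT.one⟩
  mul_mem' := by
    rintro σ τ ⟨m, P, hP, hσ⟩ ⟨m', Q, hQ, hτ⟩
    exact ⟨m + m', _, le_trans (natDegree_add_le _ _)
      (max_le hP (by rwa [natDegree_taylor])), hσ.mul hτ⟩
  inv_mem' := by
    rintro σ ⟨m, P, hP, hσ⟩
    exact ⟨-m, _, by simpa [natDegree_taylor] using hP, hσ.inv⟩

variable (K) in
def Dinf : Subgroup (CremonaField K ≃ₐ[K] CremonaField K) where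
  carrier := {σ | ∃ m : ℤ, ∃ P : K[X], IsT m P σ}
  one_mem' := ⟨0, 0, IsT.one⟩
  mul_mem' := by
    rintro σ τ ⟨m, P, hσ⟩ ⟨m', Q, hτ⟩
    exact ⟨_, _, hσ.mul hτ⟩
  inv_mem' := by
    rintro σ ⟨m, P, hσ⟩
    exact ⟨_, _, hσ.inv⟩

variable (K) in
def E [CharZero K] (N j : ℕ) : Subgroup (CremonaField K ≃ₐ[K] CremonaField K) where
  carrier := {σ | ∃ P : K[X], P.degree < ((N - j : ℕ) : WithBot ℕ) ∧ IsT 0 P σ}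
  one_mem' := ⟨0, by simp only [degree_zero]; exact WithBot.bot_lt_coe _, IsT.one⟩
  mul_mem' := by
    rintro σ τ ⟨P, hP, hσ⟩ ⟨Q, hQ, hτ⟩
    refine ⟨P + Q, lt_of_le_of_lt (degree_add_le _ _) (max_lt hP hQ),
      (hσ.mul hτ).congr (by ring) ?_⟩
    norm_num [taylor_zero]
  inv_mem' := by
    rintro σ ⟨P, hP, hσ⟩
    refine ⟨-P, by simpa using hP, hσ.inv.congr (by ring) ?_⟩
    norm_num [taylor_zero]

lemma D_mono [CharZero K] {M N : ℕ} (h : M ≤ N) : D K M ≤ D K N := by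
  rintro σ ⟨m, P, hP, hσ⟩
  exact ⟨m, P, hP.trans h, hσ⟩

lemma mem_D_of_mem_Dinf [CharZero K] {σ : CremonaField K ≃ₐ[K] CremonaField K}
    (h : σ ∈ Dinf K) : ∃ N, σ ∈ D K N := by
  obtain ⟨m, P, hσ⟩ := h
  exact ⟨P.natDegree, m, P, le_rfl, hσ⟩

lemma commutator_mem_E_base [CharZero K] {N : ℕ}
    {σ τ : CremonaField K ≃ₐ[K] CremonaField K}
    (hσ : σ ∈ D K N) (hτ : τ ∈ D K N) : ⁅σ, τ⁆ ∈ E K N 0 := by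
  obtain ⟨m, P, hP, hσ'⟩ := hσ; obtain ⟨m', Q, hQ, hτ'⟩ := hτ
  have hdP : P.degree < ((N + 1 : ℕ) : WithBot ℕ) := by
    refine lt_of_le_of_lt degree_le_natDegree ?_
    exact_mod_cast Nat.lt_succ_of_le hP
  have hdQ : Q.degree < ((N + 1 : ℕ) : WithBot ℕ) := by
    refine lt_of_le_of_lt degree_le_natDegree ?_
    exact_mod_cast Nat.lt_succ_of_le hQ
  have d1 : (P - taylor (m' : K) P).degree < ((N : ℕ) : WithBot ℕ) := by
    simpa using degree_sub_taylor_lt P (m' : K) hdP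
  have d2 : (taylor (m : K) Q - Q).degree < ((N : ℕ) : WithBot ℕ) := by
    rw [show taylor (m : K) Q - Q = -(Q - taylor (m : K) Q) by ring, degree_neg]
    simpa using degree_sub_taylor_lt Q (m : K) hdQ
  refine ⟨_, ?_, hσ'.commutator hτ'⟩
  simpa using lt_of_le_of_lt (degree_add_le _ _) (max_lt d1 d2)

lemma commutator_mem_E_succ [CharZero K] {N j : ℕ}
    {σ τ : CremonaField K ≃ₐ[K] CremonaField K}
    (hσ : σ ∈ E K N j) (hτ : τ ∈ D K N) : ⁅σ, τ⁆ ∈ E K N (j + 1) := by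
  obtain ⟨P, hP, hσ'⟩ := hσ; obtain ⟨m', Q, hQ, hτ'⟩ := hτ
  refine ⟨P - taylor (m' : K) P, ?_, (hσ'.commutator hτ').congr rfl ?_⟩
  · have := degree_sub_taylor_lt P (m' : K) hP
    have he : N - j - 1 = N - (j + 1) := by omega
    rwa [he] at this
  · norm_num [taylor_zero]

lemma lcs_D_le [CharZero K] (N j : ℕ) :
    lowerCentralSeries (⊤ : Subgroup ↥(D K N)) (j + 1) ≤ (E K N j).comap (D K N).subtype := by
  induction j with
  | zero =>
    show ⁅lowerCentralSeries (⊤ : Subgroup ↥(D K N)) 0, ⊤⁆ ≤ _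
    rw [Subgroup.commutator_le]
    intro g₁ _ g₂ _
    rw [Subgroup.mem_comap, map_commutatorElement]
    exact commutator_mem_E_base g₁.2 g₂.2
  | succ j ih =>
    show ⁅lowerCentralSeries (⊤ : Subgroup ↥(D K N)) (j + 1), ⊤⁆ ≤ _
    rw [Subgroup.commutator_le]
    intro g₁ h₁ g₂ _
    rw [Subgroup.mem_comap, map_commutatorElement]
    exact commutator_mem_E_succ (Subgroup.mem_comap.mp (ih h₁)) g₂.2

lemma isNilpotent_D [CharZero K] (N : ℕ) : Group.IsNilpotent ↥(D K N) := by
  rw [nilpotent_iff_lowerCentralSeries]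
  refine ⟨N + 1, eq_bot_iff.mpr ?_⟩
  intro g hg
  obtain ⟨P, hP, hTx, hTy⟩ := Subgroup.mem_comap.mp (lcs_D_le N N hg)
  have hP0 : P = 0 := by
    by_contra hne
    have h1 := zero_le_degree_iff.mpr hne
    rw [Nat.sub_self] at hP
    exact absurd (lt_of_le_of_lt h1 (by simpa using hP)) (lt_irrefl _)
  have hg1 : ((D K N).subtype g : CremonaField K ≃ₐ[K] CremonaField K) = 1 := by
    apply algEquiv_ext
    · rw [hTx]; simp
    · rw [hTy, hP0]; simp
  exact Subgroup.mem_bot.mpr (Subtype.ext hg1)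

section Main

set_option linter.unusedSectionVars false

variable [CharZero K]
variable {s : CremonaField K ≃ₐ[K] CremonaField K}
variable {a : ℕ → (CremonaField K ≃ₐ[K] CremonaField K)}

lemma isT_s (hsx : s (genX K) = genX K + 1) (hsy : s (genY K) = genY K) : IsT 1 0 s :=
  ⟨by rw [hsx]; norm_num, by simp [hsy]⟩

lemma isT_a (ha : ∀ k : ℕ, (a k) (genX K) = genX K ∧ (a k) (genY K) = genY K + genX K ^ k)
    (k : ℕ) : IsT 0 ((Polynomial.X : K[X]) ^ k) (a k) :=
  ⟨by simp [(ha k).1], by simp [(ha k).2, map_pow, Polynomial.aeval_X]⟩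

lemma closure_le_Dinf (hsx : s (genX K) = genX K + 1) (hsy : s (genY K) = genY K)
    (ha : ∀ k : ℕ, (a k) (genX K) = genX K ∧ (a k) (genY K) = genY K + genX K ^ k) :
    Subgroup.closure ({s} ∪ Set.range a) ≤ Dinf K := by
  rw [Subgroup.closure_le]
  rintro σ (rfl | ⟨k, rfl⟩)
  · exact ⟨1, 0, isT_s hsx hsy⟩
  · exact ⟨0, _, isT_a ha k⟩

lemma part1 (hsx : s (genX K) = genX K + 1) (hsy : s (genY K) = genY K)
    (ha : ∀ k : ℕ, (a k) (genX K) = genX K ∧ (a k) (genY K) = genY K + genX K ^ k)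
    (H : Subgroup ↥(Subgroup.closure ({s} ∪ Set.range a)))
    (hFG : Group.FG H) : Group.IsNilpotent H := by
  obtain ⟨T, hT⟩ := (Group.fg_iff_subgroup_fg H).mp hFG
  have hdmem : ∀ g : ↥(Subgroup.closure ({s} ∪ Set.range a)),
      ∃ N, (g : CremonaField K ≃ₐ[K] CremonaField K) ∈ D K N :=
    fun g => mem_D_of_mem_Dinf (closure_le_Dinf hsx hsy ha g.2)
  choose Nf hNf using hdmem
  have hTD : H.map (Subgroup.closure ({s} ∪ Set.range a)).subtype ≤ D K (T.sup Nf) := by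
    rw [← hT, MonoidHom.map_closure, Subgroup.closure_le]
    rintro σ ⟨g, hg, rfl⟩
    exact D_mono (Finset.le_sup (Finset.mem_coe.mp hg)) (hNf g)
  haveI := isNilpotent_D (K := K) (T.sup Nf)
  haveI : Group.IsNilpotent
      ↥((H.map (Subgroup.closure ({s} ∪ Set.range a)).subtype).subgroupOf (D K (T.sup Nf))) :=
    Subgroup.isNilpotent _
  exact nilpotent_of_mulEquiv ((Subgroup.subgroupOfEquivOfLe hTD).trans
    (H.equivMapOfInjective _ (Subgroup.closure ({s} ∪ Set.range a)).subtype_injective).symm)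

lemma IsT.npow {σ : CremonaField K ≃ₐ[K] CremonaField K} {P : K[X]}
    (h : IsT 0 P σ) : ∀ n : ℕ, IsT 0 ((n : ℤ) • P) (σ ^ n)
  | 0 => by simpa using IsT.one
  | (n + 1) => by
    rw [pow_succ]
    refine ((IsT.npow h n).mul h).congr (by ring) ?_
    rw [Int.cast_zero, taylor_zero]
    push_cast
    rw [add_smul, one_smul]

lemma IsT.zpowgen {σ : CremonaField K ≃ₐ[K] CremonaField K} {P : K[X]}
    (h : IsT 0 P σ) : ∀ z : ℤ, IsT 0 (z • P) (σ ^ z)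
  | Int.ofNat k => by simpa using h.npow k
  | Int.negSucc k => by
    rw [zpow_negSucc]
    refine (IsT.inv (h.npow (k + 1))).congr (by ring) ?_
    rw [neg_zero, Int.cast_zero, taylor_zero, Int.negSucc_eq, neg_smul]
    push_cast
    ring_nf

variable (K) in
noncomputable def fall (k : ℕ) : K[X] :=
  ∏ i ∈ Finset.range k, (Polynomial.X - Polynomial.C (i : K))

noncomputable def fallZ (n : ℕ) : ℤ[X] :=
  ∏ i ∈ Finset.range n, (Polynomial.X - Polynomial.C (i : ℤ))

lemma fallZ_natDegree (n : ℕ) : (fallZ n).natDegree = n := by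
  rw [fallZ, Polynomial.natDegree_prod_of_monic _ _ (fun i _ => Polynomial.monic_X_sub_C _)]
  have h : ∑ i ∈ Finset.range n, (Polynomial.X - Polynomial.C (i : ℤ)).natDegree
      = ∑ _i ∈ Finset.range n, 1 :=
    Finset.sum_congr rfl (fun i _ => Polynomial.natDegree_X_sub_C _)
  rw [h]
  simp

lemma fallZ_map (n : ℕ) : (fallZ n).map (Int.castRingHom K) = fall K n := by
  rw [fallZ, fall, Polynomial.map_prod]
  refine Finset.prod_congr rfl fun i _ => ?_
  simp

lemma fall_sub_taylor (j : ℕ) :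
    fall K (j + 1) - taylor (1 : K) (fall K (j + 1)) = (-((j : K) + 1)) • fall K j := by
  have h1 : fall K (j + 1) = fall K j * (Polynomial.X - Polynomial.C (j : K)) :=
    Finset.prod_range_succ _ _
  have h2 : taylor (1 : K) (fall K (j + 1)) = fall K j * (Polynomial.X + 1) := by
    rw [taylor_apply, fall, Polynomial.prod_comp]
    calc ∏ i ∈ Finset.range (j + 1),
          (Polynomial.X - Polynomial.C (i : K)).comp (Polynomial.X + Polynomial.C 1)
        = ∏ i ∈ Finset.range (j + 1),
            (Polynomial.X + Polynomial.C 1 - Polynomial.C (i : K)) := by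
          refine Finset.prod_congr rfl fun i _ => ?_
          simp [Polynomial.sub_comp]
      _ = (∏ i ∈ Finset.range j,
            (Polynomial.X + Polynomial.C 1 - Polynomial.C ((i + 1 : ℕ) : K)))
            * (Polynomial.X + Polynomial.C 1 - Polynomial.C ((0 : ℕ) : K)) :=
          Finset.prod_range_succ' _ _
      _ = fall K j * (Polynomial.X + 1) := by
          rw [fall]
          congr 1
          · refine Finset.prod_congr rfl fun i _ => ?_
            push_cast [Polynomial.C_add, Polynomial.C_1]
            ring
          · simp
  rw [h2, h1, Polynomial.smul_eq_C_mul]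
  push_cast [Polynomial.C_add, Polynomial.C_1, Polynomial.C_neg]
  ring

lemma list_range_sum (g : ℕ → K[X]) (B : ℕ) :
    ((List.range B).map g).sum = ∑ k ∈ Finset.range B, g k := by
  induction B with
  | zero => simp
  | succ B ih => rw [List.range_succ, List.map_append, List.sum_append,
      Finset.sum_range_succ, ih]; simp

def cseq (n : ℕ) : ℕ → K := fun j => Nat.rec 1 (fun j' prev => -(((n - j' : ℕ) : K)) * prev) j

lemma cseq_zero (n : ℕ) : cseq (K := K) n 0 = 1 := rfl

lemma cseq_succ (n j : ℕ) : cseq (K := K) n (j + 1) = -(((n - j : ℕ) : K)) * cseq n j := rfl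

def bseq {α : Type*} [Group α] (b0 g : α) : ℕ → α :=
  fun j => Nat.rec b0 (fun _ prev => ⁅prev, g⁆) j

lemma bseq_zero {α : Type*} [Group α] (b0 g : α) : bseq b0 g 0 = b0 := rfl

lemma bseq_succ {α : Type*} [Group α] (b0 g : α) (j : ℕ) :
    bseq b0 g (j + 1) = ⁅bseq b0 g j, g⁆ := rfl

lemma part2 (hsx : s (genX K) = genX K + 1) (hsy : s (genY K) = genY K)
    (ha : ∀ k : ℕ, (a k) (genX K) = genX K ∧ (a k) (genY K) = genY K + genX K ^ k) :
    ¬ Group.IsNilpotent ↥(Subgroup.closure ({s} ∪ Set.range a)) := by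
  intro hnil
  obtain ⟨n, hn⟩ := nilpotent_iff_lowerCentralSeries.mp hnil
  have hsmem : s ∈ Subgroup.closure ({s} ∪ Set.range a) :=
    Subgroup.subset_closure (Or.inl rfl)
  have hamem : ∀ k, a k ∈ Subgroup.closure ({s} ∪ Set.range a) :=
    fun k => Subgroup.subset_closure (Or.inr ⟨k, rfl⟩)
  let S0 : ↥(Subgroup.closure ({s} ∪ Set.range a)) := ⟨s, hsmem⟩
  let A : ℕ → ↥(Subgroup.closure ({s} ∪ Set.range a)) := fun k => ⟨a k, hamem k⟩
  let b0 : ↥(Subgroup.closure ({s} ∪ Set.range a)) :=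
    ((List.range (n + 1)).map (fun k => (A k) ^ ((fallZ n).coeff k))).prod
  have hb0coe : (b0 : CremonaField K ≃ₐ[K] CremonaField K)
      = ((List.range (n + 1)).map (fun k => (a k) ^ ((fallZ n).coeff k))).prod := by
    show ((((List.range (n + 1)).map (fun k => (A k) ^ ((fallZ n).coeff k))).prod :
      ↥(Subgroup.closure ({s} ∪ Set.range a))) : CremonaField K ≃ₐ[K] CremonaField K) = _
    rw [SubmonoidClass.coe_list_prod, List.map_map]
    congr 1
  have hb0T : IsT 0 (fall K n) (b0 : CremonaField K ≃ₐ[K] CremonaField K) := by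
    rw [hb0coe]
    have hlist : ∀ l : List ℕ,
        IsT 0 ((l.map (fun k => (fallZ n).coeff k • ((Polynomial.X : K[X]) ^ k))).sum)
          ((l.map (fun k => (a k) ^ ((fallZ n).coeff k))).prod) := by
      intro l
      induction l with
      | nil => simpa using IsT.one
      | cons k l ih =>
        simp only [List.map_cons, List.prod_cons, List.sum_cons]
        refine (((isT_a ha k).zpowgen _).mul ih).congr (by ring) ?_
        rw [Int.cast_zero, taylor_zero]
    refine (hlist (List.range (n + 1))).congr rfl ?_
    rw [list_range_sum, ← fallZ_map]
    rw [Polynomial.as_sum_range' ((fallZ n).map (Int.castRingHom K)) (n + 1)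
      (lt_of_le_of_lt Polynomial.natDegree_map_le (by rw [fallZ_natDegree]; omega))]
    refine Finset.sum_congr rfl fun k _ => ?_
    rw [Polynomial.coeff_map, ← Polynomial.C_mul_X_pow_eq_monomial, zsmul_eq_mul]
    simp
  have hc0 : ∀ j, j ≤ n → cseq (K := K) n j ≠ 0 := by
    intro j
    induction j with
    | zero => intro _; rw [cseq_zero]; exact one_ne_zero
    | succ j ih =>
      intro hj
      rw [cseq_succ]
      exact mul_ne_zero (neg_ne_zero.mpr (Nat.cast_ne_zero.mpr (by omega))) (ih (by omega))
  have hmain : ∀ j, j ≤ n →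
      IsT 0 (cseq (K := K) n j • fall K (n - j)) ((bseq b0 S0 j : _) : CremonaField K ≃ₐ[K] CremonaField K)
      ∧ bseq b0 S0 j ∈ Subgroup.lowerCentralSeries (⊤ : Subgroup ↥(Subgroup.closure ({s} ∪ Set.range a))) j := by
    intro j
    induction j with
    | zero =>
      intro _
      refine ⟨?_, Subgroup.mem_top _⟩
      rw [bseq_zero, cseq_zero, one_smul, Nat.sub_zero]
      exact hb0T
    | succ j ih =>
      intro hj
      obtain ⟨hT, hmem⟩ := ih (by omega)
      constructor
      · have hcoe : ((bseq b0 S0 (j + 1) : ↥(Subgroup.closure ({s} ∪ Set.range a))) :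
            CremonaField K ≃ₐ[K] CremonaField K)
            = ⁅((bseq b0 S0 j : _) : CremonaField K ≃ₐ[K] CremonaField K), s⁆ := rfl
        rw [hcoe]
        have h := hT.commutator (isT_s hsx hsy)
        refine h.congr (by ring) ?_
        have hnj : n - j = (n - (j + 1)) + 1 := by omega
        simp only [Int.cast_one, Int.cast_zero, taylor_zero, map_zero, sub_zero, add_zero]
        rw [hnj, LinearMap.map_smul, ← smul_sub, fall_sub_taylor, smul_smul, cseq_succ, hnj]
        congr 1
        push_cast
        ring
      · rw [bseq_succ]
        exact Subgroup.commutator_mem_commutator hmem (Subgroup.mem_top S0)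
  obtain ⟨hT, hmem⟩ := hmain n le_rfl
  rw [hn] at hmem
  have hb1 : ((bseq b0 S0 n : ↥(Subgroup.closure ({s} ∪ Set.range a))) :
      CremonaField K ≃ₐ[K] CremonaField K) = 1 := by
    rw [Subgroup.mem_bot.mp hmem]; rfl
  have h2 := hT.2
  rw [hb1, AlgEquiv.one_apply] at h2
  have h3 : Polynomial.aeval (genX K) (cseq (K := K) n n • fall K (n - n)) = 0 :=
    (left_eq_add.mp h2)
  rw [Nat.sub_self] at h3
  have hf0 : fall K 0 = 1 := by rw [fall]; simp
  rw [hf0, Polynomial.smul_eq_C_mul, mul_one, Polynomial.aeval_C] at h3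
  exact hc0 n le_rfl ((map_eq_zero_iff _ (algebraMap K (CremonaField K)).injective).mp h3)

end Main

end Statement8Aux

theorem statement8 (K : Type*) [Field K] [CharZero K]
    (s : CremonaField K ≃ₐ[K] CremonaField K)
    (hsx : s (genX K) = genX K + 1) (hsy : s (genY K) = genY K)
    (a : ℕ → (CremonaField K ≃ₐ[K] CremonaField K))
    (ha : ∀ k : ℕ, (a k) (genX K) = genX K ∧ (a k) (genY K) = genY K + genX K ^ k) :
    (∀ H : Subgroup (Subgroup.closure ({s} ∪ Set.range a) :
        Subgroup (CremonaField K ≃ₐ[K] CremonaField K)),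
      Group.FG H → Group.IsNilpotent H) ∧
    ¬ Group.IsNilpotent (Subgroup.closure ({s} ∪ Set.range a) :
        Subgroup (CremonaField K ≃ₐ[K] CremonaField K)) :=
  ⟨fun H hFG => Statement8Aux.part1 hsx hsy ha H hFG,
   Statement8Aux.part2 hsx hsy ha⟩
end

section
/- The group Aut(ℂ²) of polynomial automorphisms of the affine plane, i.e. the group of ℂ-algebra automorphisms of the polynomial ring ℂ[x,y] = MvPolynomial (Fin 2) ℂ, is not linear over any field: for every field F and every natural number d, there is no injective group homomorphism from (MvPolynomial (Fin 2) ℂ ≃ₐ[ℂ] MvPolynomial (Fin 2) ℂ) into GL_d(F). -/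
open MvPolynomial

noncomputable section Statement10Aux

abbrev R2 : Type := MvPolynomial (Fin 2) ℂ

/-- The algebra hom sending X0 ↦ X0, X1 ↦ X1 + c·X0^m. -/
def shiftA (c : ℂ) (m : ℕ) : R2 →ₐ[ℂ] R2 :=
  aeval ![X 0, X 1 + C c * X 0 ^ m]

/-- The algebra hom sending X0 ↦ z·X0, X1 ↦ X1. -/
def scalA (z : ℂ) : R2 →ₐ[ℂ] R2 :=
  aeval ![C z * X 0, X 1]

@[simp] lemma shiftA_X0 (c : ℂ) (m : ℕ) : shiftA c m (X 0) = X 0 := by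
  simp [shiftA]

@[simp] lemma shiftA_X1 (c : ℂ) (m : ℕ) :
    shiftA c m (X 1) = X 1 + C c * X 0 ^ m := by
  simp [shiftA]

@[simp] lemma scalA_X0 (z : ℂ) : scalA z (X 0) = C z * X 0 := by
  simp [scalA]

@[simp] lemma scalA_X1 (z : ℂ) : scalA z (X 1) = X 1 := by
  simp [scalA]

@[simp] lemma shiftA_C (c a : ℂ) (m : ℕ) : shiftA c m (C a) = C a := by
  simp [shiftA, MvPolynomial.algebraMap_eq]

@[simp] lemma scalA_C (z a : ℂ) : scalA z (C a) = C a := by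
  simp [scalA, MvPolynomial.algebraMap_eq]

/-- The automorphism X0 ↦ X0, X1 ↦ X1 + c·X0^m. -/
def shiftE (c : ℂ) (m : ℕ) : R2 ≃ₐ[ℂ] R2 :=
  AlgEquiv.ofAlgHom (shiftA c m) (shiftA (-c) m)
    (by
      apply MvPolynomial.algHom_ext
      intro i
      fin_cases i <;> simp <;> ring)
    (by
      apply MvPolynomial.algHom_ext
      intro i
      fin_cases i <;> simp <;> ring)

@[simp] lemma shiftE_apply (c : ℂ) (m : ℕ) (p : R2) : shiftE c m p = shiftA c m p := rfl

/-- The automorphism X0 ↦ z·X0, X1 ↦ X1, for z ≠ 0. -/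
def scalE (z : ℂ) (hz : z ≠ 0) : R2 ≃ₐ[ℂ] R2 :=
  AlgEquiv.ofAlgHom (scalA z) (scalA z⁻¹)
    (by
      apply MvPolynomial.algHom_ext
      intro i
      fin_cases i <;> simp [← mul_assoc, ← C_mul, mul_inv_cancel₀ hz, inv_mul_cancel₀ hz])
    (by
      apply MvPolynomial.algHom_ext
      intro i
      fin_cases i <;> simp [← mul_assoc, ← C_mul, mul_inv_cancel₀ hz, inv_mul_cancel₀ hz])

@[simp] lemma scalE_apply (z : ℂ) (hz : z ≠ 0) (p : R2) : scalE z hz p = scalA z p := rfl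

lemma comm_of_pow_eq_one {z : ℂ} (hz : z ≠ 0) (c : ℂ) (m : ℕ) (h : z ^ m = 1) :
    scalE z hz * shiftE c m = shiftE c m * scalE z hz := by
  apply AlgEquiv.coe_algHom_injective
  apply MvPolynomial.algHom_ext
  intro i
  fin_cases i
  · simp [AlgEquiv.mul_apply]
  · simp only [Fin.mk_one, AlgEquiv.mul_apply, AlgHom.coe_coe, AlgEquiv.coe_toAlgHom, shiftE_apply, scalE_apply,
      shiftA_X1, scalA_X1, scalA_X0, shiftA_X0, shiftA_C, scalA_C, map_add, map_mul, map_pow,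
      mul_pow, ← C_pow, h, C_1, one_mul]

lemma ncomm_of_pow_ne_one {z : ℂ} (hz : z ≠ 0) (m : ℕ) (h : z ^ m ≠ 1) :
    scalE z hz * shiftE 1 m ≠ shiftE 1 m * scalE z hz := by
  intro H
  have h1 : (scalE z hz * shiftE 1 m) (X 1) = (shiftE 1 m * scalE z hz) (X 1) := by
    rw [H]
  simp only [AlgEquiv.mul_apply, shiftE_apply, scalE_apply, shiftA_X1, scalA_X1, scalA_X0,
    shiftA_C, scalA_C, map_add, map_mul, map_pow, mul_pow] at h1
  rw [← C_pow] at h1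
  rcases Nat.eq_zero_or_pos m with hm | hm
  · exact h (by simp [hm])
  have h2 := congrArg (coeff (Finsupp.single 0 m)) h1
  have hne : Finsupp.single (1 : Fin 2) 1 ≠ Finsupp.single (0 : Fin 2) m := by
    intro hcon
    have := DFunLike.congr_fun hcon (0 : Fin 2)
    simp [Finsupp.single_apply] at this
    omega
  simp [coeff_add, coeff_C_mul, coeff_X', coeff_X_pow, hne] at h2
  rw [← C_pow, coeff_C_mul, coeff_X_pow, if_pos rfl, mul_one] at h2
  exact h h2

end Statement10Aux

noncomputable section Statement10Aux2

/-- ζ k = exp(πi/2^k), satisfying ζ^(2^k) = -1. -/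
def zeta10 (k : ℕ) : ℂ := Complex.exp (Real.pi * Complex.I / 2 ^ k)

lemma zeta10_ne (k : ℕ) : zeta10 k ≠ 0 := Complex.exp_ne_zero _

lemma zeta10_pow (k : ℕ) : zeta10 k ^ (2 ^ k) = -1 := by
  rw [zeta10, ← Complex.exp_nat_mul]
  have h2 : ((2 : ℂ) ^ k) ≠ 0 := pow_ne_zero _ two_ne_zero
  rw [show ((2 ^ k : ℕ) : ℂ) * (Real.pi * Complex.I / 2 ^ k) = Real.pi * Complex.I by
    push_cast; field_simp]
  exact Complex.exp_pi_mul_I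

lemma zeta10_pow_of_lt {k j : ℕ} (h : k < j) : zeta10 k ^ (2 ^ j) = 1 := by
  have hj : 2 ^ j = 2 ^ k * 2 ^ (j - k) := by
    rw [← pow_add]
    congr 1
    omega
  rw [hj, pow_mul, zeta10_pow]
  exact Even.neg_one_pow ⟨2 ^ (j - k - 1), by
    rw [← two_mul, ← pow_succ']
    congr 1
    omega⟩

lemma zeta10_pow_ne (k : ℕ) : zeta10 k ^ (2 ^ k) ≠ 1 := by
  rw [zeta10_pow]
  intro hcon
  have : (1 : ℂ) + 1 = 0 := by linear_combination -hcon
  norm_num at this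

end Statement10Aux2

/-- The automorphism X0 ↦ X0, X1 ↦ X1 + X0^(2^k). -/
noncomputable def AA10 (k : ℕ) : R2 ≃ₐ[ℂ] R2 := shiftE 1 (2 ^ k)

/-- The automorphism X0 ↦ ζ_k X0, X1 ↦ X1. -/
noncomputable def BB10 (k : ℕ) : R2 ≃ₐ[ℂ] R2 := scalE (zeta10 k) (zeta10_ne k)

lemma BB_AA_comm {k j : ℕ} (h : k < j) : BB10 k * AA10 j = AA10 j * BB10 k :=
  comm_of_pow_eq_one (zeta10_ne k) 1 (2 ^ j) (zeta10_pow_of_lt h)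

lemma BB_AA_ncomm (k : ℕ) : BB10 k * AA10 k ≠ AA10 k * BB10 k :=
  ncomm_of_pow_ne_one (zeta10_ne k) (2 ^ k) (zeta10_pow_ne k)

theorem statement10 (F : Type*) [Field F] (d : ℕ) :
    ¬∃ φ : (MvPolynomial (Fin 2) ℂ ≃ₐ[ℂ] MvPolynomial (Fin 2) ℂ) →*
        Matrix.GeneralLinearGroup (Fin d) F, Function.Injective φ := by
  rintro ⟨φ, hφ⟩
  -- The centralizer subspaces
  let V : ℕ → Submodule F (Matrix (Fin d) (Fin d) F) := fun k =>
    { carrier := {m | ∀ j, k ≤ j → m * (φ (AA10 j) : Matrix (Fin d) (Fin d) F)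
        = (φ (AA10 j) : Matrix (Fin d) (Fin d) F) * m}
      add_mem' := by
        intro a b ha hb j hj
        rw [add_mul, mul_add, ha j hj, hb j hj]
      zero_mem' := by
        intro j hj
        rw [zero_mul, mul_zero]
      smul_mem' := by
        intro c a ha j hj
        rw [smul_mul_assoc, mul_smul_comm, ha j hj] }
  have hVmono : ∀ k, V k < V (k + 1) := by
    intro k
    constructor
    · intro m hm j hj
      exact hm j (le_trans (Nat.le_succ k) hj)
    · intro hle
      have hBin : (φ (BB10 k) : Matrix (Fin d) (Fin d) F) ∈ V (k + 1) := by
        intro j hj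
        have hc := BB_AA_comm (show k < j by omega)
        have := congrArg φ hc
        rw [map_mul, map_mul] at this
        have := congrArg Units.val this
        rw [Units.val_mul, Units.val_mul] at this
        exact this
      have hBnot := hle hBin
      have hmat := hBnot k le_rfl
      have huni : φ (BB10 k) * φ (AA10 k) = φ (AA10 k) * φ (BB10 k) := by
        apply Units.ext
        rw [Units.val_mul, Units.val_mul]
        exact hmat
      rw [← map_mul, ← map_mul] at huni
      exact BB_AA_ncomm k (hφ huni)
  have hsm : StrictMono fun k => Module.finrank F (V k) :=
    strictMono_nat_of_lt_succ fun k => Submodule.finrank_lt_finrank_of_lt (hVmono k)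
  have h1 : d * d + 1 ≤ Module.finrank F (V (d * d + 1)) := hsm.le_apply
  have h2 : Module.finrank F (V (d * d + 1)) ≤ d * d := by
    have := Submodule.finrank_le (V (d * d + 1))
    rwa [Module.finrank_matrix, Module.finrank_self, Fintype.card_fin, mul_one] at this
  omega
end

section
/- Let G be a group such that for every natural number n there exists a subgroup H of G that is torsion-free, nilpotent, and of nilpotency class exactly n. Then for every field F and every natural number d, there is no injective group homomorphism from G into GL_d(F). -/
/-- The pre-2025 Mathlib `Monoid.IsTorsionFree`: no nontrivial element has finite order. -/
def Monoid.IsTorsionFree (G : Type*) [Monoid G] : Prop :=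
  ∀ g : G, g ≠ 1 → ¬IsOfFinOrder g

set_option linter.unusedSectionVars false

open Subgroup Module FiniteDimensional
open scoped commutatorElement

universe uΓ uU uV


section GroupPart

variable {G : Type*} [Group G]

private lemma comm_mul_left (a b c : G) : ⁅a * b, c⁆ = a * ⁅b, c⁆ * a⁻¹ * ⁅a, c⁆ := by
  simp only [commutatorElement_def]; group

private lemma comm_pow_of_commute (x h : G) (hc : Commute x ⁅x, h⁆) (e : ℕ) :
    ⁅x ^ e, h⁆ = ⁅x, h⁆ ^ e := by
  induction e with
  | zero => simp
  | succ e ih =>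
      have h1 : ⁅x ^ (e+1), h⁆ = x ^ e * ⁅x, h⁆ * (x ^ e)⁻¹ * ⁅x ^ e, h⁆ := by
        rw [pow_succ]
        simpa using comm_mul_left (x ^ e) x h
      have h2 : Commute (x ^ e) ⁅x, h⁆ := (hc.pow_left e)
      rw [h1, ih, h2.eq, pow_succ']
      group

/-- Modulo `Z j`, we have `⁅x^e, h⁆ = ⁅x,h⁆^e`, provided `⁅x,h⁆ ∈ Z (j+1)`. -/
private lemma key_comm_pow_mem (j e : ℕ) (x h : G)
    (hc : ⁅x, h⁆ ∈ Subgroup.upperCentralSeries G (j + 1)) :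
    ⁅x ^ e, h⁆ * (⁅x, h⁆ ^ e)⁻¹ ∈ Subgroup.upperCentralSeries G j := by
  set N := Subgroup.upperCentralSeries G j with hN
  letI : N.Normal := by rw [hN]; infer_instance
  set π := QuotientGroup.mk' N with hπ
  have hxc : ⁅⁅x, h⁆, x⁆ ∈ N := by
    have := Subgroup.mem_upperCentralSeries_succ_iff.mp hc x
    simpa [commutatorElement_def] using this
  have hcomm : Commute (π x) ⁅π x, π h⁆ := by
    have h1 : π ⁅⁅x, h⁆, x⁆ = 1 := (QuotientGroup.eq_one_iff _).mpr hxc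
    rw [map_commutatorElement, map_commutatorElement] at h1
    have h2 := commutatorElement_eq_one_iff_commute.mp h1
    exact (h2.symm)
  have hmain : π (⁅x ^ e, h⁆ * (⁅x, h⁆ ^ e)⁻¹) = 1 := by
    rw [map_mul, map_inv, map_pow, map_commutatorElement, map_commutatorElement, map_pow,
      comm_pow_of_commute _ _ hcomm e]
    group
  exact (QuotientGroup.eq_one_iff _).mp hmain

/-- Climbing lemma: if all commutators from the second center are killed by `e`,
then each upper-central factor (above level 1) has exponent dividing `e`. -/
private lemma climb (e : ℕ)
    (hbase : ∀ x ∈ Subgroup.upperCentralSeries G 2, ∀ h : G, ⁅x, h⁆ ^ e = 1) :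
    ∀ j, 1 ≤ j → ∀ x ∈ Subgroup.upperCentralSeries G (j + 1), x ^ e ∈ Subgroup.upperCentralSeries G j := by
  intro j
  induction j with
  | zero => omega
  | succ j ih =>
      intro _ x hx
      rcases Nat.eq_or_lt_of_le (Nat.one_le_iff_ne_zero.mpr (Nat.succ_ne_zero j)) with h1 | h1
      · -- j = 0 case : x ∈ Z 2
        have hj : j = 0 := by omega
        subst hj
        apply Subgroup.mem_upperCentralSeries_succ_iff.mpr
        intro y
        have hc : ⁅x, y⁆ ∈ Subgroup.upperCentralSeries G 1 := by
          have := Subgroup.mem_upperCentralSeries_succ_iff.mp hx y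
          simpa [commutatorElement_def] using this
        have key := key_comm_pow_mem 0 e x y hc
        have hb : ⁅x, y⁆ ^ e = 1 := hbase x hx y
        rw [hb] at key
        simpa [commutatorElement_def] using key
      · -- j ≥ 1
        have hj : 1 ≤ j := by omega
        apply Subgroup.mem_upperCentralSeries_succ_iff.mpr
        intro y
        have hc : ⁅x, y⁆ ∈ Subgroup.upperCentralSeries G (j + 1) := by
          have := Subgroup.mem_upperCentralSeries_succ_iff.mp hx y
          simpa [commutatorElement_def] using this
        have hce : ⁅x, y⁆ ^ e ∈ Subgroup.upperCentralSeries G j := ih hj _ hc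
        have key := key_comm_pow_mem j e x y hc
        have hmem : ⁅x ^ e, y⁆ ∈ Subgroup.upperCentralSeries G j := by
          have heq : ⁅x ^ e, y⁆ = (⁅x ^ e, y⁆ * (⁅x, y⁆ ^ e)⁻¹) * ⁅x, y⁆ ^ e := by group
          rw [heq]
          exact mul_mem key hce
        simpa [commutatorElement_def] using hmem

/-- Mal'cev: in a torsion-free group, `x ∈ Z (j+1)` and `x^m ∈ Z j` imply `x ∈ Z j`. -/
private lemma malcev_step (tf : ∀ x : G, ∀ m : ℕ, 0 < m → x ^ m = 1 → x = 1)
    (m : ℕ) (hm : 0 < m) :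
    ∀ j, ∀ x : G, x ∈ Subgroup.upperCentralSeries G (j + 1) →
      x ^ m ∈ Subgroup.upperCentralSeries G j → x ∈ Subgroup.upperCentralSeries G j := by
  intro j
  induction j with
  | zero =>
      intro x _ hxm
      have : x ^ m = 1 := by simpa using hxm
      simpa using tf x m hm this
  | succ j ih =>
      intro x hx hxm
      apply Subgroup.mem_upperCentralSeries_succ_iff.mpr
      intro y
      have hc' : ⁅x, y⁆ ∈ Subgroup.upperCentralSeries G (j + 1) := by
        have := Subgroup.mem_upperCentralSeries_succ_iff.mp hx y
        simpa [commutatorElement_def] using this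
      -- show ⁅x,y⁆ ^ m ∈ Z j
      have hxmy : ⁅x ^ m, y⁆ ∈ Subgroup.upperCentralSeries G j := by
        have := Subgroup.mem_upperCentralSeries_succ_iff.mp hxm y
        simpa [commutatorElement_def] using this
      have key := key_comm_pow_mem j m x y hc'
      have hcm : ⁅x, y⁆ ^ m ∈ Subgroup.upperCentralSeries G j := by
        have : ⁅x, y⁆ ^ m = (⁅x ^ m, y⁆ * (⁅x, y⁆ ^ m)⁻¹)⁻¹ * ⁅x ^ m, y⁆ := by group
        rw [this]
        exact mul_mem (inv_mem key) hxmy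
      exact ih ⁅x, y⁆ hc' hcm

private lemma malcev_full [hG : Group.IsNilpotent G]
    (tf : ∀ x : G, ∀ m : ℕ, 0 < m → x ^ m = 1 → x = 1)
    (m : ℕ) (hm : 0 < m) (j : ℕ) (x : G)
    (hx : x ^ m ∈ Subgroup.upperCentralSeries G j) : x ∈ Subgroup.upperCentralSeries G j := by
  have htop : x ∈ Subgroup.upperCentralSeries G (j + Group.nilpotencyClass G) := by
    have : Subgroup.upperCentralSeries G (Group.nilpotencyClass G) = ⊤ :=
      Subgroup.upperCentralSeries_nilpotencyClass
    have h2 : x ∈ Subgroup.upperCentralSeries G (Group.nilpotencyClass G) := by rw [this]; trivial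
    exact Subgroup.upperCentralSeries_mono G (by omega) h2
  -- descend
  have : ∀ k : ℕ, x ∈ Subgroup.upperCentralSeries G (j + k) → x ∈ Subgroup.upperCentralSeries G j := by
    intro k
    induction k with
    | zero => intro h; simpa using h
    | succ k ih =>
        intro h
        apply ih
        apply malcev_step tf m hm (j + k) x h
        exact Subgroup.upperCentralSeries_mono G (by omega) hx
  exact this _ htop

/-- iterated commutator -/
def itcomm (x : G) (l : List G) : G := l.foldl (fun a b => ⁅a, b⁆) x

@[simp] lemma itcomm_nil (x : G) : itcomm x [] = x := rfl

@[simp] lemma itcomm_cons (x y : G) (l : List G) : itcomm x (y :: l) = itcomm ⁅x, y⁆ l := rfl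

lemma itcomm_append (x : G) (l₁ l₂ : List G) :
    itcomm x (l₁ ++ l₂) = itcomm (itcomm x l₁) l₂ := by
  simp [itcomm, List.foldl_append]

lemma map_itcomm {H : Type*} [Group H] (f : G →* H) (x : G) (l : List G) :
    f (itcomm x l) = itcomm (f x) (l.map f) := by
  induction l generalizing x with
  | nil => rfl
  | cons y l ih => simp [itcomm_cons, ih, map_commutatorElement]

lemma mem_ucs_iff_itcomm (j : ℕ) (x : G) :
    x ∈ Subgroup.upperCentralSeries G j ↔ ∀ l : List G, l.length = j → itcomm x l = 1 := by
  induction j generalizing x with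
  | zero =>
      simp only [Subgroup.upperCentralSeries_zero, mem_bot]
      constructor
      · rintro rfl l hl
        rw [List.length_eq_zero_iff] at hl; subst hl; rfl
      · intro h; simpa using h [] rfl
  | succ j ih =>
      constructor
      · intro hx l hl
        match l with
        | y :: l' =>
            rw [itcomm_cons]
            have hc : ⁅x, y⁆ ∈ Subgroup.upperCentralSeries G j := by
              have := Subgroup.mem_upperCentralSeries_succ_iff.mp hx y
              simpa [commutatorElement_def] using this
            exact (ih ⁅x, y⁆).mp hc l' (by simpa using hl)
      · intro h
        apply Subgroup.mem_upperCentralSeries_succ_iff.mpr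
        intro y
        have hc : ⁅x, y⁆ ∈ Subgroup.upperCentralSeries G j := by
          apply (ih ⁅x, y⁆).mpr
          intro l hl
          have := h (y :: l) (by simpa using hl)
          simpa using this
        simpa [commutatorElement_def] using hc

end GroupPart


lemma itcomm_mem_lcs {G : Type*} [Group G] (x : G) (l : List G) (k : ℕ)
    (hx : x ∈ (⊤ : Subgroup G).lowerCentralSeries k) :
    itcomm x l ∈ (⊤ : Subgroup G).lowerCentralSeries (k + l.length) := by
  induction l generalizing x k with
  | nil => simpa using hx
  | cons y l ih =>
      have h1 : ⁅x, y⁆ ∈ (⊤ : Subgroup G).lowerCentralSeries (k + 1) := by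
        rw [Subgroup.lowerCentralSeries_succ]
        exact Subgroup.commutator_mem_commutator hx (Subgroup.mem_top y)
      have := ih ⁅x, y⁆ (k + 1) h1
      simpa [Nat.add_assoc, Nat.add_comm, Nat.add_left_comm] using this

section ZCpart

variable {Γ : Type*} [Group Γ] {M : Type*} [Group M]

def ZC (ρ : Γ →* M) (j : ℕ) : Subgroup Γ :=
  (Subgroup.upperCentralSeries ρ.range j).comap ρ.rangeRestrict

lemma ZC_mono (ρ : Γ →* M) {i j : ℕ} (h : i ≤ j) : ZC ρ i ≤ ZC ρ j :=
  Subgroup.comap_mono (Subgroup.upperCentralSeries_mono _ h)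

private lemma list_lift (ρ : Γ →* M) (l' : List ρ.range) :
    ∃ l : List Γ, l.map ρ.rangeRestrict = l' := by
  induction l' with
  | nil => exact ⟨[], rfl⟩
  | cons y l ih =>
      obtain ⟨l₀, hl₀⟩ := ih
      obtain ⟨g, hg⟩ := ρ.rangeRestrict_surjective y
      exact ⟨g :: l₀, by simp [hg, hl₀]⟩

lemma mem_ZC_iff (ρ : Γ →* M) (j : ℕ) (g : Γ) :
    g ∈ ZC ρ j ↔ ∀ l : List Γ, l.length = j → ρ (itcomm g l) = 1 := by
  rw [ZC, Subgroup.mem_comap, mem_ucs_iff_itcomm]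
  constructor
  · intro H l hl
    have h1 := H (l.map ρ.rangeRestrict) (by simpa using hl)
    rw [← map_itcomm] at h1
    have h2 := congrArg (Subtype.val) h1
    simpa [MonoidHom.coe_rangeRestrict] using h2
  · intro H l' hl'
    obtain ⟨l, rfl⟩ := list_lift ρ l'
    rw [← map_itcomm]
    apply Subtype.ext
    simpa [MonoidHom.coe_rangeRestrict] using H l (by simpa using hl')

lemma ZC_eq_of_injective (ρ : Γ →* M) (hinj : Function.Injective ρ) (j : ℕ) :
    ZC ρ j = Subgroup.upperCentralSeries Γ j := by
  have hb : Function.Bijective ρ.rangeRestrict :=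
    ⟨MonoidHom.rangeRestrict_injective_iff.mpr hinj, ρ.rangeRestrict_surjective⟩
  let e : Γ ≃* ρ.range := MulEquiv.ofBijective ρ.rangeRestrict hb
  have := Subgroup.comap_upperCentralSeries e j
  rw [← this]
  rfl

end ZCpart

section CenterNontrivial

lemma center_exists_ne_one {H : Type*} [Group H] [Group.IsNilpotent H] [Nontrivial H] :
    ∃ u : H, u ∈ Subgroup.center H ∧ u ≠ 1 := by
  by_contra hc
  push_neg at hc
  have hbot : ∀ n, Subgroup.upperCentralSeries H n = ⊥ := by
    intro n
    induction n with
    | zero => rfl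
    | succ n ih =>
        ext x
        simp only [Subgroup.mem_bot]
        constructor
        · intro hx
          have hcent : x ∈ Subgroup.center H := by
            rw [Subgroup.mem_center_iff]
            intro y
            have := Subgroup.mem_upperCentralSeries_succ_iff.mp hx y
            rw [ih, Subgroup.mem_bot, commutatorElement_def] at this
            have h2 : x * y * x⁻¹ * y⁻¹ * y = y := by rw [this]; group
            calc y * x = x * y * x⁻¹ * y⁻¹ * (y * x) := by rw [this]; group
            _ = x * y := by group
          by_contra hne
          exact hne (hc x hcent)
        · rintro rfl; exact Subgroup.one_mem _
  obtain ⟨n, hn⟩ := Group.IsNilpotent.nilpotent (G := H)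
  rw [hbot n] at hn
  obtain ⟨x, y, hxy⟩ := exists_pair_ne H
  apply hxy
  have hx : x ∈ (⊥ : Subgroup H) := by rw [hn]; trivial
  have hy : y ∈ (⊥ : Subgroup H) := by rw [hn]; trivial
  rw [Subgroup.mem_bot] at hx hy
  rw [hx, hy]

end CenterNontrivial

section CentralScalar

variable {E : Type*} [Field E] [IsAlgClosed E]
variable {V : Type uV} [AddCommGroup V] [Module E V] [FiniteDimensional E V]
variable {Γ : Type uΓ} [Group Γ]

/-- If the representation has no proper nonzero invariant subspace, any endomorphism
commuting with the whole image is a scalar. -/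
lemma central_scalar [Nontrivial V] (ρ : Γ →* (Module.End E V)ˣ)
    (hirr : ∀ p : Submodule E V,
      (∀ γ : Γ, ∀ v ∈ p, (ρ γ : Module.End E V) v ∈ p) → p = ⊥ ∨ p = ⊤)
    (w : Module.End E V) (hw : ∀ γ : Γ, Commute w (ρ γ : Module.End E V)) :
    ∃ c : E, w = c • (1 : Module.End E V) := by
  obtain ⟨c, hc⟩ := Module.End.exists_eigenvalue w
  refine ⟨c, ?_⟩
  have hinv : ∀ γ : Γ, ∀ v ∈ w.eigenspace c, (ρ γ : Module.End E V) v ∈ w.eigenspace c := by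
    intro γ v hv
    rw [Module.End.mem_eigenspace_iff] at hv ⊢
    calc w ((ρ γ : Module.End E V) v) = (ρ γ : Module.End E V) (w v) := by
          have := (hw γ).eq
          exact congrFun (congrArg (fun f => f.toFun) this) v
    _ = c • (ρ γ : Module.End E V) v := by rw [hv, map_smul]
  rcases hirr _ hinv with hbot | htop
  · exact absurd hbot hc
  · apply LinearMap.ext
    intro v
    have hv : v ∈ w.eigenspace c := htop ▸ Submodule.mem_top
    rw [Module.End.mem_eigenspace_iff] at hv
    simpa using hv

end CentralScalar


section Restrict

variable {E : Type*} [Field E]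
variable {V : Type uV} [AddCommGroup V] [Module E V]
variable {Γ : Type uΓ} [Group Γ]

def RepInv (ρ : Γ →* (Module.End E V)ˣ) (p : Submodule E V) : Prop :=
  ∀ γ : Γ, ∀ v ∈ p, (ρ γ : Module.End E V) v ∈ p

lemma pow_mem_inv (g : Module.End E V) (p : Submodule E V) (hg : ∀ v ∈ p, g v ∈ p) :
    ∀ (N : ℕ), ∀ v ∈ p, (g ^ N) v ∈ p := by
  intro N
  induction N with
  | zero => intro v hv; simpa using hv
  | succ N ih =>
      intro v hv
      rw [pow_succ]
      exact ih _ (hg v hv)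

lemma restrict_pow (g : Module.End E V) (p : Submodule E V) (hg : ∀ v ∈ p, g v ∈ p) (N : ℕ) :
    (LinearMap.restrict g hg) ^ N = LinearMap.restrict (g ^ N) (pow_mem_inv g p hg N) := by
  induction N with
  | zero =>
      apply LinearMap.ext; intro v; apply Subtype.ext
      simp [LinearMap.restrict_coe_apply]
  | succ N ih =>
      rw [pow_succ, ih]
      apply LinearMap.ext; intro v; apply Subtype.ext
      simp only [Module.End.mul_apply, LinearMap.restrict_coe_apply, pow_succ]

def resEnd (ρ : Γ →* (Module.End E V)ˣ) (p : Submodule E V) (hp : RepInv ρ p) :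
    Γ →* Module.End E ↥p where
  toFun γ := LinearMap.restrict (ρ γ : Module.End E V) (hp γ)
  map_one' := by
    apply LinearMap.ext; intro v; apply Subtype.ext
    simp [LinearMap.restrict_coe_apply]
  map_mul' γ₁ γ₂ := by
    apply LinearMap.ext; intro v; apply Subtype.ext
    simp [LinearMap.restrict_coe_apply, Module.End.mul_apply, Units.val_mul]

lemma resEnd_sub_one_pow_zero (ρ : Γ →* (Module.End E V)ˣ) (p : Submodule E V)
    (hp : RepInv ρ p) (h : Γ) (N : ℕ)
    (hN : ((ρ h : Module.End E V) - 1) ^ N = 0) :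
    ((resEnd ρ p hp) h - 1) ^ N = 0 := by
  have hsub : ∀ v ∈ p, ((ρ h : Module.End E V) - 1) v ∈ p := by
    intro v hv
    have : ((ρ h : Module.End E V) - 1) v = (ρ h : Module.End E V) v - v := by
      simp [LinearMap.sub_apply]
    rw [this]
    exact sub_mem (hp h v hv) hv
  have heq : (resEnd ρ p hp) h - 1 = LinearMap.restrict _ hsub := by
    apply LinearMap.ext; intro v; apply Subtype.ext
    simp [resEnd, LinearMap.restrict_coe_apply, LinearMap.sub_apply]
  rw [heq, restrict_pow]
  apply LinearMap.ext; intro v; apply Subtype.ext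
  have h2 := LinearMap.congr_fun hN (v : V)
  simpa [LinearMap.restrict_coe_apply] using h2

def quotEnd (ρ : Γ →* (Module.End E V)ˣ) (p : Submodule E V) (hp : RepInv ρ p) :
    Γ →* Module.End E (V ⧸ p) where
  toFun γ := Submodule.mapQ p p (ρ γ : Module.End E V) (fun v hv => hp γ v hv)
  map_one' := by
    apply Submodule.linearMap_qext
    apply LinearMap.ext; intro v
    simp [Submodule.mapQ_apply]
  map_mul' γ₁ γ₂ := by
    apply Submodule.linearMap_qext
    apply LinearMap.ext; intro v
    simp [Submodule.mapQ_apply, Units.val_mul, Module.End.mul_apply]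

lemma quotEnd_sub_one_pow_zero (ρ : Γ →* (Module.End E V)ˣ) (p : Submodule E V)
    (hp : RepInv ρ p) (h : Γ) (N : ℕ)
    (hN : ((ρ h : Module.End E V) - 1) ^ N = 0) :
    ((quotEnd ρ p hp) h - 1) ^ N = 0 := by
  have hsub : p ≤ p.comap ((ρ h : Module.End E V) - 1) := by
    intro v hv
    simp only [Submodule.mem_comap, LinearMap.sub_apply, Module.End.one_apply]
    exact sub_mem (hp h v hv) hv
  have heq : (quotEnd ρ p hp) h - 1 = Submodule.mapQ p p _ hsub := by
    apply Submodule.linearMap_qext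
    apply LinearMap.ext; intro v
    simp [quotEnd, Submodule.mapQ_apply, LinearMap.sub_apply]
  rw [heq, ← Submodule.mapQ_pow]
  apply Submodule.linearMap_qext
  apply LinearMap.ext; intro v
  have h2 := LinearMap.congr_fun hN (v : V)
  simp only [LinearMap.comp_apply, Submodule.mkQ_apply, Submodule.mapQ_apply, h2]
  simp

end Restrict


lemma mem_ZC_of_ucs_one {Γ : Type*} [Group Γ] {M : Type*} [Group M] (ρ : Γ →* M) (g : Γ)
    (h : ρ.rangeRestrict g ∈ Subgroup.upperCentralSeries ρ.range 1) : g ∈ ZC ρ 1 :=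
  Subgroup.mem_comap.mpr h

section ResQuotCoe
variable {E : Type*} [Field E]
variable {V : Type uV} [AddCommGroup V] [Module E V]
variable {Γ : Type uΓ} [Group Γ]

lemma resEnd_coe (ρ : Γ →* (Module.End E V)ˣ) (p : Submodule E V) (hp : RepInv ρ p)
    (γ : Γ) (v : ↥p) : ((resEnd ρ p hp γ) v : V) = (ρ γ : Module.End E V) v := by
  simp [resEnd, LinearMap.restrict_coe_apply]

lemma quotEnd_apply_mk (ρ : Γ →* (Module.End E V)ˣ) (p : Submodule E V) (hp : RepInv ρ p)
    (γ : Γ) (v : V) :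
    (quotEnd ρ p hp γ) (Submodule.Quotient.mk v) =
      Submodule.Quotient.mk ((ρ γ : Module.End E V) v) := by
  simp [quotEnd, Submodule.mapQ_apply]
end ResQuotCoe


section KOL
variable {E : Type*} [Field E] [IsAlgClosed E]
variable {Γ : Type uΓ} [Group Γ] [Group.IsNilpotent Γ]


lemma kol_fixed :
    ∀ (n : ℕ) (U : Type uU) [AddCommGroup U] [Module E U] [FiniteDimensional E U],
      Nontrivial U →
      ∀ (τ : Γ →* (Module.End E U)ˣ),
      finrank E U ≤ n →
      (∀ h : Γ, IsNilpotent ((τ h : Module.End E U) - 1)) →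
      ∃ v : U, v ≠ 0 ∧ ∀ h : Γ, (τ h : Module.End E U) v = v := by
  intro n
  induction n with
  | zero =>
      intro U _ _ _ hnt τ hfr _
      have : 0 < finrank E U := finrank_pos_iff.mpr hnt
      omega
  | succ n ih =>
      intro U _ _ _ hnt τ hfr hu
      by_cases hex : ∃ p : Submodule E U, RepInv τ p ∧ p ≠ ⊥ ∧ p ≠ ⊤
      · obtain ⟨p, hpinv, hp0, hpt⟩ := hex
        obtain ⟨x, hxp, hx0⟩ := Submodule.ne_bot_iff p |>.mp hp0
        have hntp : Nontrivial ↥p := ⟨⟨⟨x, hxp⟩, 0, by simp [Subtype.ext_iff, hx0]⟩⟩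
        have hfrp : finrank E ↥p ≤ n := by
          have h1 : finrank E ↥p < finrank E U :=
            Submodule.finrank_lt hpt
          omega
        have hup : ∀ h : Γ, IsNilpotent (((resEnd τ p hpinv).toHomUnits h :
            Module.End E ↥p) - 1) := by
          intro h
          obtain ⟨N, hN⟩ := hu h
          refine ⟨N, ?_⟩
          have := resEnd_sub_one_pow_zero τ p hpinv h N hN
          rwa [MonoidHom.coe_toHomUnits]
        obtain ⟨w, hw0, hwfix⟩ := ih ↥p hntp ((resEnd τ p hpinv).toHomUnits) hfrp hup
        refine ⟨(w : U), by simpa using hw0, ?_⟩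
        intro h
        have := hwfix h
        have h2 := congrArg (Subtype.val) this
        rw [MonoidHom.coe_toHomUnits] at h2
        rw [← resEnd_coe τ p hpinv h w]
        exact h2
      · push_neg at hex
        have hirr : ∀ p : Submodule E U,
            (∀ γ : Γ, ∀ v ∈ p, (τ γ : Module.End E U) v ∈ p) → p = ⊥ ∨ p = ⊤ := by
          intro p hp
          by_contra hcon
          push_neg at hcon
          exact hcon.2 (hex p hp hcon.1)
        by_cases hrt : ∀ h : Γ, τ h = 1
        · obtain ⟨v, hv⟩ := exists_ne (0 : U)
          exact ⟨v, hv, fun h => by rw [hrt h]; simp⟩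
        · exfalso
          push_neg at hrt
          obtain ⟨h₀, hh₀⟩ := hrt
          haveI : Group.IsNilpotent τ.range :=
            nilpotent_of_surjective τ.rangeRestrict τ.rangeRestrict_surjective
          haveI : Nontrivial τ.range := by
            refine ⟨⟨⟨τ h₀, ⟨h₀, rfl⟩⟩, 1, ?_⟩⟩
            simp only [ne_eq, Subtype.ext_iff]
            exact hh₀
          obtain ⟨u, huc, hune⟩ := center_exists_ne_one (H := τ.range)
          have hcomm : ∀ γ : Γ, Commute (Units.val (u : (Module.End E U)ˣ))
              (Units.val (τ γ)) := by
            intro γ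
            have h1 := (Subgroup.mem_center_iff.mp huc) ⟨τ γ, ⟨γ, rfl⟩⟩
            have h2 := congrArg (fun z : ↥τ.range => Units.val (Subtype.val z)) h1
            simp only [Subgroup.coe_mul, Units.val_mul] at h2
            show Units.val (u : (Module.End E U)ˣ) * Units.val (τ γ) =
              Units.val (τ γ) * Units.val (u : (Module.End E U)ˣ)
            exact h2.symm
          obtain ⟨c, hc⟩ := central_scalar τ hirr _ hcomm
          obtain ⟨γ₀, hγ₀⟩ := u.2
          obtain ⟨N, hN⟩ := hu γ₀
          have hγu : (τ γ₀ : Module.End E U) = ((u : (Module.End E U)ˣ) : Module.End E U) := by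
            rw [hγ₀]
          rw [hγu, hc] at hN
          have hsm : (c • (1 : Module.End E U) - 1) = (c - 1) • (1 : Module.End E U) := by
            rw [sub_smul, one_smul]
          rw [hsm, smul_pow, one_pow] at hN
          obtain ⟨v, hv⟩ := exists_ne (0 : U)
          have hNv := LinearMap.congr_fun hN v
          simp only [LinearMap.smul_apply, Module.End.one_apply, LinearMap.zero_apply] at hNv
          have hcN : (c - 1) ^ N = 0 := by
            by_contra hne
            exact hv (by
              have := smul_eq_zero.mp hNv
              tauto)
          have hc1 : c = 1 := by
            have h1 := pow_eq_zero_iff' (M₀ := E) |>.mp hcN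
            exact sub_eq_zero.mp h1.1
          apply hune
          apply Subtype.ext
          apply Units.ext
          rw [← hγ₀, hγu, hc, hc1, one_smul]
          simp
end KOL


section KW
variable {E : Type*} [Field E] [IsAlgClosed E]
variable {Γ : Type uΓ} [Group Γ] [Group.IsNilpotent Γ]


lemma kol_words :
    ∀ (n : ℕ) (U : Type uU) [AddCommGroup U] [Module E U] [FiniteDimensional E U]
      (τ : Γ →* (Module.End E U)ˣ),
      finrank E U ≤ n →
      (∀ h : Γ, IsNilpotent ((τ h : Module.End E U) - 1)) →
      ∀ l : List Γ, n ≤ l.length →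
      (l.map (fun h => (τ h : Module.End E U) - 1)).prod = 0 := by
  intro n
  induction n with
  | zero =>
      intro U _ _ _ τ hfr hu l _
      have hU : Subsingleton U := by
        have h0 : finrank E U = 0 := by omega
        exact finrank_zero_iff.mp h0
      exact Subsingleton.elim _ _
  | succ n ih =>
      intro U iU1 iU2 iU3 τ hfr hu l hl
      by_cases hsmall : finrank E U ≤ n
      · exact ih U τ hsmall hu l (by omega)
      · have hnt : Nontrivial U := by
          have : 0 < finrank E U := by omega
          exact finrank_pos_iff.mp this
        obtain ⟨v₀, hv₀0, hv₀fix⟩ :=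
          kol_fixed (E := E) (n + 1) U hnt τ hfr hu
        set U₀ : Submodule E U := ⨅ h : Γ, LinearMap.ker ((τ h : Module.End E U) - 1) with hU₀
        have hmemU₀ : ∀ v : U, v ∈ U₀ ↔ ∀ h : Γ, (τ h : Module.End E U) v = v := by
          intro v
          rw [hU₀]
          simp only [Submodule.mem_iInf, LinearMap.mem_ker, LinearMap.sub_apply,
            Module.End.one_apply, sub_eq_zero]
        have hU₀ne : U₀ ≠ ⊥ := by
          intro hbot
          have : v₀ ∈ U₀ := (hmemU₀ v₀).mpr hv₀fix
          rw [hbot] at this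
          exact hv₀0 (by simpa using this)
        have hinv : RepInv τ U₀ := by
          intro γ v hv
          rw [hmemU₀] at hv ⊢
          intro h
          have key : (τ h : Module.End E U) * (τ γ : Module.End E U) =
              (τ γ : Module.End E U) * (τ (γ⁻¹ * h * γ) : Module.End E U) := by
            rw [← Units.val_mul, ← Units.val_mul, ← map_mul, ← map_mul]
            congr 1
            group
          calc (τ h : Module.End E U) ((τ γ : Module.End E U) v)
              = ((τ h : Module.End E U) * (τ γ : Module.End E U)) v := rfl
            _ = ((τ γ : Module.End E U) * (τ (γ⁻¹ * h * γ) : Module.End E U)) v := by rw [key]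
            _ = (τ γ : Module.End E U) ((τ (γ⁻¹ * h * γ) : Module.End E U) v) := rfl
            _ = (τ γ : Module.End E U) v := by rw [hv (γ⁻¹ * h * γ)]
        -- quotient rep
        set τq := (quotEnd τ U₀ hinv).toHomUnits with hτq
        have hτqc : ∀ h : Γ, (τq h : Module.End E (U ⧸ U₀)) = quotEnd τ U₀ hinv h := by
          intro h; rw [hτq, MonoidHom.coe_toHomUnits]
        have huq : ∀ h : Γ, IsNilpotent ((τq h : Module.End E (U ⧸ U₀)) - 1) := by
          intro h
          obtain ⟨N, hN⟩ := hu h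
          rw [hτqc]
          exact ⟨N, quotEnd_sub_one_pow_zero τ U₀ hinv h N hN⟩
        have hfrq : finrank E (U ⧸ U₀) ≤ n := by
          have hadd := Submodule.finrank_quotient_add_finrank U₀
          have hpos : 0 < finrank E U₀ := by
            by_contra hz
            push_neg at hz
            have h0 : finrank E U₀ = 0 := by omega
            exact hU₀ne (Submodule.finrank_eq_zero.mp h0)
          omega
        -- intertwining of word products
        have hinter : ∀ l' : List Γ,
            (U₀.mkQ).comp ((l'.map (fun h => (τ h : Module.End E U) - 1)).prod) =
            ((l'.map (fun h => (τq h : Module.End E (U ⧸ U₀)) - 1)).prod).comp U₀.mkQ := by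
          intro l'
          induction l' with
          | nil =>
              apply LinearMap.ext; intro v; simp
          | cons h₀ l' ihl =>
              simp only [List.map_cons, List.prod_cons]
              have hone : (U₀.mkQ).comp ((τ h₀ : Module.End E U) - 1) =
                  ((τq h₀ : Module.End E (U ⧸ U₀)) - 1).comp U₀.mkQ := by
                apply LinearMap.ext
                intro v
                simp only [LinearMap.comp_apply, LinearMap.sub_apply, Module.End.one_apply,
                  map_sub, hτqc, Submodule.mkQ_apply]
                rw [quotEnd_apply_mk]
              calc (U₀.mkQ).comp (((τ h₀ : Module.End E U) - 1) *
                    (l'.map (fun h => (τ h : Module.End E U) - 1)).prod)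
                  = ((U₀.mkQ).comp ((τ h₀ : Module.End E U) - 1)).comp
                    ((l'.map (fun h => (τ h : Module.End E U) - 1)).prod) := by
                      ext v; simp [Module.End.mul_apply]
                _ = (((τq h₀ : Module.End E (U ⧸ U₀)) - 1).comp U₀.mkQ).comp
                    ((l'.map (fun h => (τ h : Module.End E U) - 1)).prod) := by rw [hone]
                _ = ((τq h₀ : Module.End E (U ⧸ U₀)) - 1).comp ((U₀.mkQ).comp
                    ((l'.map (fun h => (τ h : Module.End E U) - 1)).prod)) := by
                      ext v; simp
                _ = ((τq h₀ : Module.End E (U ⧸ U₀)) - 1).comp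
                    (((l'.map (fun h => (τq h : Module.End E (U ⧸ U₀)) - 1)).prod).comp
                      U₀.mkQ) := by rw [ihl]
                _ = _ := by ext v; simp [Module.End.mul_apply]
        -- main
        match l with
        | [] => simp at hl
        | h₀ :: l' =>
            simp only [List.map_cons, List.prod_cons]
            apply LinearMap.ext
            intro v
            have hll : n ≤ l'.length := by
              simp only [List.length_cons] at hl; omega
            have hword : (l'.map (fun h => (τq h : Module.End E (U ⧸ U₀)) - 1)).prod = 0 :=
              ih (U ⧸ U₀) τq hfrq huq l' hll
            have hmem : ((l'.map (fun h => (τ h : Module.End E U) - 1)).prod) v ∈ U₀ := by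
              have := LinearMap.congr_fun (hinter l') v
              simp only [LinearMap.comp_apply, hword, LinearMap.zero_apply] at this
              rwa [← Submodule.Quotient.mk_eq_zero, ← Submodule.mkQ_apply]
            have hker : ((τ h₀ : Module.End E U) - 1)
                (((l'.map (fun h => (τ h : Module.End E U) - 1)).prod) v) = 0 := by
              rw [hmemU₀] at hmem
              simp only [LinearMap.sub_apply, Module.End.one_apply, sub_eq_zero]
              exact hmem h₀
            simp only [Module.End.mul_apply, LinearMap.zero_apply]
            exact hker
end KW


section BK
variable {E : Type*} [Field E] [IsAlgClosed E]
variable {V : Type uV} [AddCommGroup V] [Module E V] [FiniteDimensional E V]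
variable {Γ : Type uΓ} [Group Γ] [Group.IsNilpotent Γ]

lemma block_kernel_fall (ρ : Γ →* (Module.End E V)ˣ) (p : Submodule E V)
    (hp : RepInv ρ p) (y : Γ)
    (hy1 : ∀ v ∈ p, (ρ y : Module.End E V) v = v)
    (hy2 : ∀ v : V, (ρ y : Module.End E V) v - v ∈ p)
    (l : List Γ) (hlen : finrank E V * finrank E V ≤ l.length) :
    ρ (itcomm y l) = 1 := by
  classical
  -- the kernel predicate
  set Kx : Γ → Prop := fun z =>
    (∀ v ∈ p, (ρ z : Module.End E V) v = v) ∧ (∀ v : V, (ρ z : Module.End E V) v - v ∈ p)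
    with hKx
  have hKy : Kx y := ⟨hy1, hy2⟩
  -- the conjugation action on End
  set C : Γ → Module.End E (Module.End E V) := fun h =>
    (LinearMap.mulLeft E ((ρ h : Module.End E V))).comp
      (LinearMap.mulRight E ((ρ h⁻¹ : Module.End E V))) with hC
  have hC_apply : ∀ (h : Γ) (f : Module.End E V),
      C h f = (ρ h : Module.End E V) * f * (ρ h⁻¹ : Module.End E V) := by
    intro h f
    simp [hC, LinearMap.mulLeft_apply, LinearMap.mulRight_apply, mul_assoc]
  have hHH' : ∀ h : Γ, (ρ h : Module.End E V) * (ρ h⁻¹ : Module.End E V) = 1 := by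
    intro h
    rw [← Units.val_mul, ← map_mul, mul_inv_cancel, map_one, Units.val_one]
  have hH'H : ∀ h : Γ, (ρ h⁻¹ : Module.End E V) * (ρ h : Module.End E V) = 1 := by
    intro h
    rw [← Units.val_mul, ← map_mul, inv_mul_cancel, map_one, Units.val_one]
  -- key step formula
  have hstep : ∀ z : Γ, Kx z → ∀ h : Γ, Kx ⁅z, h⁆ ∧
      ((ρ ⁅z, h⁆ : Module.End E V) - 1) =
        (1 - C h) ((ρ z : Module.End E V) - 1) := by
    intro z hz h
    obtain ⟨hz1, hz2⟩ := hz
    set A : Module.End E V := (ρ z : Module.End E V) with hA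
    set b : Module.End E V := A - 1 with hb
    have hbv : ∀ v : V, b v = A v - v := by intro v; simp [hb]
    have hbp : ∀ v ∈ p, b v = 0 := by
      intro v hv; rw [hbv, hz1 v hv, sub_self]
    have hbr : ∀ v : V, b v ∈ p := by intro v; rw [hbv]; exact hz2 v
    set H : Module.End E V := (ρ h : Module.End E V) with hH
    set H' : Module.End E V := (ρ h⁻¹ : Module.End E V) with hH'
    have hHp : ∀ v ∈ p, H v ∈ p := fun v hv => hp h v hv
    have hH'p : ∀ v ∈ p, H' v ∈ p := fun v hv => hp h⁻¹ v hv
    -- A * b = b and b * A = b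
    have hAb : A * b = b := by
      apply LinearMap.ext; intro v
      simp only [Module.End.mul_apply]
      exact hz1 _ (hbr v)
    have hbA : b * A = b := by
      apply LinearMap.ext; intro v
      simp only [Module.End.mul_apply]
      have h2 : A v = v + b v := by rw [hbv]; abel
      rw [h2, map_add, hbp _ (hbr v), add_zero]
    -- inverse of ρ z
    have hAinv : (ρ z⁻¹ : Module.End E V) = 1 - b := by
      have h1 : A * (1 - b) = 1 := by
        rw [mul_sub, mul_one, hAb, hb]; abel
      calc (ρ z⁻¹ : Module.End E V) = (ρ z⁻¹ : Module.End E V) * (A * (1 - b)) := by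
            rw [h1, mul_one]
        _ = ((ρ z⁻¹ : Module.End E V) * A) * (1 - b) := by rw [mul_assoc]
        _ = 1 * (1 - b) := by
            rw [hA, ← Units.val_mul, ← map_mul, inv_mul_cancel, map_one, Units.val_one]
        _ = 1 - b := by rw [one_mul]
    -- the commutator formula
    have hcomm_val : (ρ ⁅z, h⁆ : Module.End E V) = 1 + b - C h b := by
      have hexp : (ρ ⁅z, h⁆ : Module.End E V) = A * H * (1 - b) * H' := by
        rw [commutatorElement_def]
        rw [map_mul, map_mul, map_mul, Units.val_mul, Units.val_mul, Units.val_mul, hAinv]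
      have hbH : b * (H * b * H') = 0 := by
        apply LinearMap.ext; intro v
        simp only [Module.End.mul_apply, LinearMap.zero_apply]
        exact hbp _ (hHp _ (hbr _))
      have hAHbH' : A * (H * b * H') = H * b * H' := by
        have hA1b : A = 1 + b := by rw [hb]; abel
        rw [hA1b, add_mul, one_mul, hbH, add_zero]
      calc (ρ ⁅z, h⁆ : Module.End E V) = A * H * (1 - b) * H' := hexp
        _ = A * (H * H') - A * (H * b * H') := by noncomm_ring
        _ = A - H * b * H' := by rw [hHH' h, mul_one, hAHbH']
        _ = 1 + b - C h b := by rw [hC_apply, hb, hH, hH']; abel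
    constructor
    · constructor
      · intro v hv
        rw [hcomm_val]
        have h1 : b v = 0 := hbp v hv
        have h2 : C h b v = 0 := by
          rw [hC_apply]
          simp only [Module.End.mul_apply]
          rw [hbp _ (hH'p v hv), map_zero]
        simp only [LinearMap.sub_apply, LinearMap.add_apply, Module.End.one_apply, h1, h2]
        abel
      · intro v
        rw [hcomm_val]
        have h2 : C h b v ∈ p := by
          rw [hC_apply]
          simp only [Module.End.mul_apply]
          exact hHp _ (hbr _)
        simp only [LinearMap.sub_apply, LinearMap.add_apply, Module.End.one_apply]
        have : (v + b v - C h b v) - v = b v - C h b v := by abel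
        rw [this]
        exact sub_mem (hbr v) h2
    · rw [hcomm_val]
      simp only [LinearMap.sub_apply, Module.End.one_apply, hb]
      apply LinearMap.ext; intro v
      simp only [LinearMap.sub_apply, LinearMap.add_apply, Module.End.one_apply,
        Module.End.mul_apply]
      abel
  -- the span of kernel elements
  set gen : Set (Module.End E V) := {f | ∃ z : Γ, Kx z ∧ f = (ρ z : Module.End E V) - 1}
    with hgen
  set BK : Submodule E (Module.End E V) := Submodule.span E gen with hBK
  have hyBK : ((ρ y : Module.End E V) - 1) ∈ BK :=
    Submodule.subset_span ⟨y, hKy, rfl⟩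
  -- conjugation preserves generators
  have hCgen : ∀ h : Γ, ∀ f ∈ gen, C h f ∈ gen := by
    intro h f hf
    obtain ⟨z, hz, rfl⟩ := hf
    refine ⟨h * z * h⁻¹, ?_, ?_⟩
    · constructor
      · intro v hv
        have h1 : (ρ h⁻¹ : Module.End E V) v ∈ p := hp h⁻¹ v hv
        have h2 : (ρ (h * z * h⁻¹) : Module.End E V) v =
            (ρ h : Module.End E V) ((ρ z : Module.End E V) ((ρ h⁻¹ : Module.End E V) v)) := by
          rw [map_mul, map_mul, Units.val_mul, Units.val_mul]
          rfl
        rw [h2, hz.1 _ h1]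
        have h5 : ((ρ h : Module.End E V) * (ρ h⁻¹ : Module.End E V)) v = v := by
          rw [hHH' h]; rfl
        conv_rhs => rw [← h5]
        rfl
      · intro v
        have h2 : (ρ (h * z * h⁻¹) : Module.End E V) v =
            (ρ h : Module.End E V) ((ρ z : Module.End E V) ((ρ h⁻¹ : Module.End E V) v)) := by
          rw [map_mul, map_mul, Units.val_mul, Units.val_mul]
          rfl
        rw [h2]
        set w := (ρ h⁻¹ : Module.End E V) v with hw
        have h3 : (ρ z : Module.End E V) w = w + ((ρ z : Module.End E V) w - w) := by abel
        rw [h3, map_add]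
        have h4 : (ρ h : Module.End E V) w = v := by
          rw [hw]
          have h5 : ((ρ h : Module.End E V) * (ρ h⁻¹ : Module.End E V)) v = v := by
            rw [hHH' h]; rfl
          conv_rhs => rw [← h5]
          rfl
        rw [h4]
        have h5 : v + (ρ h : Module.End E V) ((ρ z : Module.End E V) w - w) - v =
            (ρ h : Module.End E V) ((ρ z : Module.End E V) w - w) := by abel
        rw [h5]
        exact hp h _ (hz.2 w)
    · rw [hC_apply]
      rw [map_mul, map_mul, Units.val_mul, Units.val_mul]
      have : (ρ h : Module.End E V) * ((ρ z : Module.End E V) - 1) * (ρ h⁻¹ : Module.End E V) =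
          (ρ h : Module.End E V) * (ρ z : Module.End E V) * (ρ h⁻¹ : Module.End E V) -
          (ρ h : Module.End E V) * (ρ h⁻¹ : Module.End E V) := by noncomm_ring
      rw [this, hHH' h]
  have hCBK : ∀ h : Γ, ∀ f ∈ BK, C h f ∈ BK := by
    intro h f hf
    have hmap : BK.map (C h) ≤ BK := by
      rw [hBK, Submodule.map_span]
      apply Submodule.span_le.mpr
      intro f' hf'
      obtain ⟨f₀, hf₀, rfl⟩ := hf'
      exact Submodule.subset_span (hCgen h f₀ hf₀)
    exact hmap ⟨f, hf, rfl⟩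
  -- restricted monoid hom
  set CB : Γ →* Module.End E ↥BK :=
    { toFun := fun h => LinearMap.restrict (C h) (hCBK h)
      map_one' := by
        apply LinearMap.ext; intro f; apply Subtype.ext
        simp only [LinearMap.restrict_coe_apply, hC_apply, Module.End.one_apply]
        rw [inv_one, map_one, Units.val_one, one_mul, mul_one]
      map_mul' := by
        intro h₁ h₂
        apply LinearMap.ext; intro f; apply Subtype.ext
        simp only [LinearMap.restrict_coe_apply, hC_apply, Module.End.mul_apply]
        rw [mul_inv_rev, map_mul, map_mul, Units.val_mul, Units.val_mul]
        noncomm_ring } with hCB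
  set τB := CB.toHomUnits with hτB
  have hτBc : ∀ h : Γ, (τB h : Module.End E ↥BK) = LinearMap.restrict (C h) (hCBK h) := by
    intro h
    rw [hτB, MonoidHom.coe_toHomUnits]
    rfl
  -- nilpotency index of Γ
  obtain ⟨N₀, hN₀⟩ := Subgroup.nilpotent_iff_lowerCentralSeries.mp (by infer_instance : Group.IsNilpotent Γ)
  have hiter2 : ∀ (h : Γ) (N : ℕ) (z : Γ), Kx z →
      ((1 - C h) ^ N) ((ρ z : Module.End E V) - 1) =
        (ρ (itcomm z (List.replicate N h)) : Module.End E V) - 1 := by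
    intro h N
    induction N with
    | zero => intro z hz; simp
    | succ N ih =>
        intro z hz
        obtain ⟨hKnew, hform⟩ := hstep z hz h
        rw [pow_succ, Module.End.mul_apply, ← hform]
        rw [List.replicate_succ, itcomm_cons]
        exact ih ⁅z, h⁆ hKnew
  have hkill : ∀ h : Γ, ∀ f ∈ BK, ((1 - C h) ^ N₀) f = 0 := by
    intro h
    have hsub : BK ≤ LinearMap.ker ((1 - C h) ^ N₀) := by
      rw [hBK]
      apply Submodule.span_le.mpr
      intro f hf
      obtain ⟨z, hz, rfl⟩ := hf
      rw [SetLike.mem_coe, LinearMap.mem_ker, hiter2 h N₀ z hz]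
      have hmem : itcomm z (List.replicate N₀ h) ∈ (⊤ : Subgroup Γ).lowerCentralSeries N₀ := by
        have := itcomm_mem_lcs z (List.replicate N₀ h) 0 (by simp)
        simpa using this
      rw [hN₀] at hmem
      rw [Subgroup.mem_bot] at hmem
      rw [hmem, map_one, Units.val_one, sub_self]
    intro f hf
    exact LinearMap.mem_ker.mp (hsub hf)
  have hnilB : ∀ h : Γ, IsNilpotent ((τB h : Module.End E ↥BK) - 1) := by
    intro h
    refine ⟨N₀, ?_⟩
    have hsb : ∀ f ∈ BK, (C h - 1) f ∈ BK := by
      intro f hf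
      have h1 : (C h - 1) f = C h f - f := by simp [LinearMap.sub_apply]
      rw [h1]
      exact sub_mem (hCBK h f hf) hf
    have heq : (τB h : Module.End E ↥BK) - 1 = LinearMap.restrict (C h - 1) hsb := by
      apply LinearMap.ext; intro f; apply Subtype.ext
      simp only [LinearMap.sub_apply, Module.End.one_apply, LinearMap.restrict_coe_apply, hτBc]
      rfl
    rw [heq, restrict_pow]
    apply LinearMap.ext; intro f; apply Subtype.ext
    simp only [LinearMap.restrict_coe_apply, LinearMap.zero_apply]
    have hrw : (C h - 1) = (-1 : E) • (1 - C h) := by module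
    rw [hrw, smul_pow]
    simp only [LinearMap.smul_apply]
    rw [hkill h (f : Module.End E V) f.2]
    simp
  -- dimension bound
  have hfrBK : finrank E ↥BK ≤ finrank E V * finrank E V := by
    have h1 : finrank E ↥BK ≤ finrank E (Module.End E V) := Submodule.finrank_le BK
    have h2 : finrank E (Module.End E V) = finrank E V * finrank E V :=
      Module.finrank_linearMap (R := E) (S := E) (M := V) (N := V)
    omega
  have hword := kol_words (finrank E V * finrank E V) ↥BK τB hfrBK hnilB l.reverse
    (by simpa using hlen)
  -- translation lemma
  have htrans : ∀ (lw : List Γ) (z : Γ), Kx z →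
      (ρ (itcomm z lw) : Module.End E V) - 1 =
        ((lw.map (fun h => 1 - C h)).reverse.prod) ((ρ z : Module.End E V) - 1) := by
    intro lw
    induction lw with
    | nil => intro z hz; simp
    | cons h lw ih =>
        intro z hz
        obtain ⟨hKnew, hform⟩ := hstep z hz h
        rw [itcomm_cons, ih ⁅z, h⁆ hKnew, hform]
        rw [List.map_cons, List.reverse_cons, List.prod_append, List.prod_cons, List.prod_nil,
          mul_one, Module.End.mul_apply]
  -- value intertwining
  have hvali : ∀ (lw : List Γ) (x : ↥BK),
      (((lw.map (fun h => (τB h : Module.End E ↥BK) - 1)).prod x : ↥BK) : Module.End E V) =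
        ((lw.map (fun h => C h - 1)).prod) (x : Module.End E V) := by
    intro lw
    induction lw with
    | nil => intro x; simp
    | cons h lw ih =>
        intro x
        simp only [List.map_cons, List.prod_cons, Module.End.mul_apply]
        set w := (lw.map (fun h => (τB h : Module.End E ↥BK) - 1)).prod x with hw
        have hval1 : ((((τB h : Module.End E ↥BK) - 1) w : ↥BK) : Module.End E V) =
            (C h - 1) ((w : ↥BK) : Module.End E V) := by
          simp only [LinearMap.sub_apply, Module.End.one_apply, AddSubgroupClass.coe_sub, hτBc,
            LinearMap.restrict_coe_apply]
        rw [hval1, ih]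
  -- conclude
  have hx0 : (l.reverse.map (fun h => C h - 1)).prod ((ρ y : Module.End E V) - 1) = 0 := by
    have hv2 := hvali l.reverse ⟨(ρ y : Module.End E V) - 1, hyBK⟩
    rw [hword] at hv2
    simpa using hv2.symm
  have hsmul : ∀ (lw : List Γ), (lw.map (fun h => 1 - C h)).prod =
      ((-1 : E) ^ lw.length) • (lw.map (fun h => C h - 1)).prod := by
    intro lw
    induction lw with
    | nil => simp
    | cons h lw ih =>
        simp only [List.map_cons, List.prod_cons, List.length_cons, ih]
        have h1 : (1 - C h) = (-1 : E) • (C h - 1) := by module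
        rw [h1, smul_mul_assoc, mul_smul_comm, smul_smul, pow_succ]
        rw [mul_comm ((-1 : E) ^ lw.length) (-1 : E)]
  have hfinal : (ρ (itcomm y l) : Module.End E V) - 1 = 0 := by
    rw [htrans l y hKy, ← List.map_reverse, hsmul l.reverse]
    simp only [LinearMap.smul_apply, hx0, smul_zero]
  apply Units.ext
  rw [Units.val_one]
  exact sub_eq_zero.mp hfinal

end BK


section IRR
variable {E : Type*} [Field E] [IsAlgClosed E]
variable {V : Type uV} [AddCommGroup V] [Module E V] [FiniteDimensional E V]
variable {Γ : Type uΓ} [Group Γ] [Group.IsNilpotent Γ]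


lemma irreducible_case [Nontrivial V] (ρ : Γ →* (Module.End E V)ˣ)
    (hirr : ∀ p : Submodule E V,
      (∀ γ : Γ, ∀ v ∈ p, (ρ γ : Module.End E V) v ∈ p) → p = ⊥ ∨ p = ⊤)
    (g : Γ) :
    ∃ m : ℕ, 0 < m ∧ ρ.rangeRestrict (g ^ m) ∈ Subgroup.upperCentralSeries ρ.range 1 := by
  classical
  haveI hnilR : Group.IsNilpotent ρ.range :=
    nilpotent_of_surjective ρ.rangeRestrict ρ.rangeRestrict_surjective
  set dV := finrank E V with hdV
  have hdVpos : 0 < dV := finrank_pos_iff.mpr (by infer_instance)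
  -- scalar lemma for central elements of the range
  have hscal : ∀ u : ρ.range, u ∈ Subgroup.center ρ.range →
      ∃ c : E, (Units.val (Subtype.val u)) = c • (1 : Module.End E V) := by
    intro u huc
    apply central_scalar ρ hirr
    intro γ
    have h1 := (Subgroup.mem_center_iff.mp huc) ⟨ρ γ, ⟨γ, rfl⟩⟩
    have h2 := congrArg (fun z : ρ.range => Units.val (Subtype.val z)) h1
    simp only [Subgroup.coe_mul, Units.val_mul] at h2
    show Units.val (Subtype.val u) * Units.val (ρ γ) =
      Units.val (ρ γ) * Units.val (Subtype.val u)
    exact h2.symm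
  -- determinant of commutators is 1
  have hdet : ∀ x hh : ρ.range, LinearMap.det (Units.val (Subtype.val ⁅x, hh⁆)) = 1 := by
    intro x hh
    have h1 : Subtype.val ⁅x, hh⁆ = ⁅Subtype.val x, Subtype.val hh⁆ := by
      simp [commutatorElement_def]
    rw [h1]
    have h2 : Units.map (LinearMap.det : Module.End E V →* E) ⁅Subtype.val x, Subtype.val hh⁆
        = 1 := by
      rw [map_commutatorElement]
      exact commutatorElement_eq_one_iff_commute.mpr (mul_comm _ _)
    have h3 := congrArg Units.val h2
    rw [Units.coe_map] at h3
    simpa using h3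
  -- base of the climb
  have hbase : ∀ x ∈ Subgroup.upperCentralSeries ρ.range 2, ∀ hh : ρ.range, ⁅x, hh⁆ ^ dV = 1 := by
    intro x hx hh
    have hc : ⁅x, hh⁆ ∈ Subgroup.upperCentralSeries ρ.range 1 := by
      have := Subgroup.mem_upperCentralSeries_succ_iff.mp hx hh
      simpa [commutatorElement_def] using this
    rw [Subgroup.upperCentralSeries_one] at hc
    obtain ⟨c, hcs⟩ := hscal _ hc
    have hdc := hdet x hh
    rw [hcs] at hdc
    have hdsm : LinearMap.det (c • (1 : Module.End E V)) = c ^ dV := by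
      rw [LinearMap.det_smul]
      simp [hdV]
    rw [hdsm] at hdc
    -- now c ^ dV = 1, conclude
    apply Subtype.ext
    apply Units.ext
    calc Units.val (Subtype.val (⁅x, hh⁆ ^ dV)) = (Units.val (Subtype.val ⁅x, hh⁆)) ^ dV := by
          norm_cast
      _ = (c • (1 : Module.End E V)) ^ dV := by rw [hcs]
      _ = c ^ dV • (1 : Module.End E V) := by rw [smul_pow, one_pow]
      _ = (1 : Module.End E V) := by rw [hdc, one_smul]
      _ = Units.val (Subtype.val (1 : ρ.range)) := by rfl
  -- iterate the climb
  have hclimb := climb (G := ρ.range) dV hbase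
  have hiter : ∀ k : ℕ, ∀ x ∈ Subgroup.upperCentralSeries ρ.range (k + 1),
      x ^ (dV ^ k) ∈ Subgroup.upperCentralSeries ρ.range 1 := by
    intro k
    induction k with
    | zero => intro x hx; simpa using hx
    | succ k ih =>
        intro x hx
        have h1 : x ^ dV ∈ Subgroup.upperCentralSeries ρ.range (k + 1) :=
          hclimb (k + 1) (by omega) x hx
        have h2 := ih (x ^ dV) h1
        rw [← pow_mul, ← pow_succ'] at h2
        exact h2
  set nc := Group.nilpotencyClass ρ.range with hnc
  refine ⟨dV ^ nc, Nat.pow_pos hdVpos, ?_⟩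
  have htop : ρ.rangeRestrict g ∈ Subgroup.upperCentralSeries ρ.range (nc + 1) := by
    have h1 : Subgroup.upperCentralSeries ρ.range nc = ⊤ := Subgroup.upperCentralSeries_nilpotencyClass
    have h2 : Subgroup.upperCentralSeries ρ.range nc ≤ Subgroup.upperCentralSeries ρ.range (nc + 1) :=
      Subgroup.upperCentralSeries_mono _ (by omega)
    exact h2 (by rw [h1]; trivial)
  have := hiter nc (ρ.rangeRestrict g) htop
  rwa [map_pow]
end IRR

def sB : ℕ → ℕ
  | 0 => 0
  | (d + 1) => sB d + (d + 1) * (d + 1) + 1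

lemma sB_mono : ∀ d, sB d ≤ sB (d + 1) := by intro d; rw [show sB (d+1) = sB d + (d+1)*(d+1) + 1 from rfl]; omega
lemma sB_pos (d : ℕ) : 1 ≤ sB (d + 1) := by rw [show sB (d+1) = sB d + (d+1)*(d+1) + 1 from rfl]; omega



section MAIN
variable {E : Type*} [Field E] [IsAlgClosed E]
variable {Γ : Type uΓ} [Group Γ]

theorem main_rep :
    ∀ (d : ℕ) (V : Type uV) [AddCommGroup V] [Module E V] [FiniteDimensional E V],
      finrank E V ≤ d →
      ∀ [Group.IsNilpotent Γ] (ρ : Γ →* (Module.End E V)ˣ) (g : Γ),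
      ∃ m : ℕ, 0 < m ∧ g ^ m ∈ ZC ρ (sB d) := by
  intro d
  induction d with
  | zero =>
      intro V _ _ _ hd _ ρ g
      haveI hss : Subsingleton V := by
        have h0 : finrank E V = 0 := by omega
        exact finrank_zero_iff.mp h0
      refine ⟨1, one_pos, ?_⟩
      rw [mem_ZC_iff]
      intro l _
      apply Units.ext
      apply LinearMap.ext
      intro v
      exact Subsingleton.elim _ _
  | succ d ih =>
      intro V _ _ _ hd _ ρ g
      by_cases hnt : Nontrivial V
      · by_cases hex : ∃ p : Submodule E V, RepInv ρ p ∧ p ≠ ⊥ ∧ p ≠ ⊤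
        · obtain ⟨p, hp, hp0, hpt⟩ := hex
          set ρ₁ := (resEnd ρ p hp).toHomUnits with hρ₁
          set ρ₂ := (quotEnd ρ p hp).toHomUnits with hρ₂
          have hfr1 : finrank E ↥p ≤ d := by
            have h1 : finrank E ↥p < finrank E V :=
              Submodule.finrank_lt hpt
            omega
          have hfr2 : finrank E (V ⧸ p) ≤ d := by
            have hadd := Submodule.finrank_quotient_add_finrank p
            have hpos : 0 < finrank E ↥p := by
              by_contra hz
              push_neg at hz
              have h0 : finrank E ↥p = 0 := by omega
              exact hp0 (Submodule.finrank_eq_zero.mp h0)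
            omega
          obtain ⟨m₁, hm₁, hg₁⟩ := ih ↥p hfr1 ρ₁ g
          obtain ⟨m₂, hm₂, hg₂⟩ := ih (V ⧸ p) hfr2 ρ₂ g
          refine ⟨m₁ * m₂, Nat.mul_pos hm₁ hm₂, ?_⟩
          rw [mem_ZC_iff]
          intro l hl
          have hlsplit : l = l.take (sB d) ++ l.drop (sB d) := (List.take_append_drop _ l).symm
          have hlen1 : (l.take (sB d)).length = sB d := by
            rw [List.length_take]
            have : sB d ≤ l.length := by
              rw [hl]
              have := sB_mono d
              omega
            omega
          have hlen2 : finrank E V * finrank E V ≤ (l.drop (sB d)).length := by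
            rw [List.length_drop, hl]
            have h1 : finrank E V ≤ d + 1 := hd
            have h2 : finrank E V * finrank E V ≤ (d+1)*(d+1) :=
              Nat.mul_le_mul h1 h1
            rw [show sB (d+1) = sB d + (d+1)*(d+1) + 1 from rfl]
            omega
          set x := g ^ (m₁ * m₂) with hx
          have hx1 : x ∈ ZC ρ₁ (sB d) := by
            rw [hx, pow_mul]
            exact Subgroup.pow_mem _ hg₁ m₂
          have hx2 : x ∈ ZC ρ₂ (sB d) := by
            rw [hx, mul_comm m₁ m₂, pow_mul]
            exact Subgroup.pow_mem _ hg₂ m₁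
          set y := itcomm x (l.take (sB d)) with hy
          have hy1' : ρ₁ y = 1 := (mem_ZC_iff ρ₁ (sB d) x).mp hx1 _ hlen1
          have hy2' : ρ₂ y = 1 := (mem_ZC_iff ρ₂ (sB d) x).mp hx2 _ hlen1
          have hy1 : ∀ v ∈ p, (ρ y : Module.End E V) v = v := by
            intro v hv
            have h1 := congrArg Units.val hy1'
            rw [hρ₁, MonoidHom.coe_toHomUnits] at h1
            have h2 := LinearMap.congr_fun h1 ⟨v, hv⟩
            have h3 := congrArg Subtype.val h2
            rw [resEnd_coe] at h3
            simpa using h3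
          have hy2 : ∀ v : V, (ρ y : Module.End E V) v - v ∈ p := by
            intro v
            have h1 := congrArg Units.val hy2'
            rw [hρ₂, MonoidHom.coe_toHomUnits] at h1
            have h2 := LinearMap.congr_fun h1 (Submodule.Quotient.mk v)
            rw [quotEnd_apply_mk] at h2
            have h3 : (Submodule.Quotient.mk ((ρ y : Module.End E V) v) : V ⧸ p) =
                Submodule.Quotient.mk v := by simpa using h2
            exact (Submodule.Quotient.eq p).mp h3
          have hfall := block_kernel_fall ρ p hp y hy1 hy2 (l.drop (sB d)) hlen2
          calc ρ (itcomm x l) = ρ (itcomm y (l.drop (sB d))) := by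
                rw [hy, ← itcomm_append, ← hlsplit]
            _ = 1 := hfall
        · push_neg at hex
          have hirr : ∀ q : Submodule E V,
              (∀ γ : Γ, ∀ v ∈ q, (ρ γ : Module.End E V) v ∈ q) → q = ⊥ ∨ q = ⊤ := by
            intro q hq
            by_contra hcon
            push_neg at hcon
            exact hcon.2 (hex q hq hcon.1)
          obtain ⟨m, hm, hmem⟩ := irreducible_case ρ hirr g
          refine ⟨m, hm, ?_⟩
          exact ZC_mono ρ (sB_pos d) (mem_ZC_of_ucs_one ρ (g ^ m) hmem)
      · haveI hss : Subsingleton V := not_nontrivial_iff_subsingleton.mp hnt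
        refine ⟨1, one_pos, ?_⟩
        rw [mem_ZC_iff]
        intro l _
        apply Units.ext
        apply LinearMap.ext
        intro v
        exact Subsingleton.elim _ _
end MAIN


theorem statement12 (G : Type*) [Group G]
    (h : ∀ n : ℕ, ∃ H : Subgroup G, Monoid.IsTorsionFree H ∧
      ∃ hN : Group.IsNilpotent H, @Group.nilpotencyClass H _ = n)
    (F : Type*) [Field F] (d : ℕ) :
    ¬∃ φ : G →* Matrix.GeneralLinearGroup (Fin d) F, Function.Injective φ := by
  rintro ⟨φ, hφ⟩
  obtain ⟨H, htf, hN, hclass⟩ := h (sB d + 1)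
  haveI : Group.IsNilpotent ↥H := hN
  set E := AlgebraicClosure F with hE
  set ψ₁ : ↥H →* Matrix.GeneralLinearGroup (Fin d) F := φ.comp H.subtype with hψ₁
  set mapMat : Matrix (Fin d) (Fin d) F →+* Matrix (Fin d) (Fin d) E :=
    (algebraMap F E).mapMatrix with hmapMat
  set ψ₂ : Matrix.GeneralLinearGroup (Fin d) F →* (Matrix (Fin d) (Fin d) E)ˣ :=
    Units.map mapMat.toMonoidHom with hψ₂
  set e3 : (Matrix (Fin d) (Fin d) E)ˣ ≃* (Module.End E (Fin d → E))ˣ :=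
    Units.mapEquiv (Matrix.toLinAlgEquiv' :
      Matrix (Fin d) (Fin d) E ≃ₐ[E] Module.End E (Fin d → E)).toMulEquiv with he3
  set ρ : ↥H →* (Module.End E (Fin d → E))ˣ := (e3.toMonoidHom.comp ψ₂).comp ψ₁ with hρ
  have hρinj : Function.Injective ρ := by
    have h1 : Function.Injective ψ₁ := hφ.comp H.subtype_injective
    have h2 : Function.Injective ψ₂ := by
      apply Units.map_injective
      intro a b hab
      ext i j
      apply (algebraMap F E).injective
      have := congrArg (fun m => m i j) hab
      simpa [hmapMat] using this
    intro a b hab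
    apply h1
    apply h2
    apply e3.injective
    exact hab
  have hfr : finrank E (Fin d → E) ≤ d := le_of_eq (Module.finrank_fin_fun E)
  have htf' : ∀ x : ↥H, ∀ m : ℕ, 0 < m → x ^ m = 1 → x = 1 := by
    intro x m hm hxm
    by_contra hne
    exact htf x hne (isOfFinOrder_iff_pow_eq_one.mpr ⟨m, hm, hxm⟩)
  have hucs : Subgroup.upperCentralSeries ↥H (sB d) = ⊤ := by
    rw [eq_top_iff]
    intro x _
    obtain ⟨m, hm, hmem⟩ := main_rep d (Fin d → E) hfr ρ x
    rw [ZC_eq_of_injective ρ hρinj] at hmem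
    exact malcev_full htf' m hm (sB d) x hmem
  have hle : Group.nilpotencyClass ↥H ≤ sB d :=
    Subgroup.upperCentralSeries_eq_top_iff_nilpotencyClass_le.mp hucs
  rw [hclass] at hle
  omega
end
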